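/- arXiv:1205.4590 — 4 statements merged into one kernel-verified Lean document; each statement's English description precedes it below -/
import Mathlib

section
/- Let Γ be smooth torsion-free connection coefficients on an open set U ⊆ ℝⁿ (n ≥ 2), let X : I → U be a smooth curve, let φ(x) = Λx + C be an affine map with Λ an invertible n×n real matrix and C ∈ ℝⁿ, and let Γ̃ be the transformed connection coefficients on Ũ = φ(U). Then for every smooth map ξ : I → ℝⁿ and every s ∈ I, the quadratic remainder operator transforms tensorially: Δ̃^μ[Λξ](s) = Λ^μ_ν Δ^ν[ξ](s), where Δ is formed from Γ along X and Δ̃ is formed from Γ̃ along φ∘X. -/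
open Set ContDiff

noncomputable section

/-- The partial derivative of `f` in the `μ`-th coordinate direction at `x`. -/
def pd {n : ℕ} (μ : Fin n) (f : (Fin n → ℝ) → ℝ) (x : Fin n → ℝ) : ℝ :=
  fderiv ℝ f x (Pi.single μ 1)

/-- `Γ` is a family of smooth, torsion-free connection coefficients on `U`:
`Γ x μ ν σ` stands for `Γ^μ_{νσ}(x)`. -/
def IsConnCoeff {n : ℕ} (U : Set (Fin n → ℝ))
    (Γ : (Fin n → ℝ) → Fin n → Fin n → Fin n → ℝ) : Prop :=
  (∀ μ ν σ : Fin n, ContDiffOn ℝ ∞ (fun x => Γ x μ ν σ) U) ∧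
  (∀ x ∈ U, ∀ μ ν σ : Fin n, Γ x μ ν σ = Γ x μ σ ν)

/-- `X` is an affinely parametrized geodesic of `Γ` on the interval `I`. -/
def IsGeodesic {n : ℕ} (Γ : (Fin n → ℝ) → Fin n → Fin n → Fin n → ℝ)
    (I : Set ℝ) (X : ℝ → Fin n → ℝ) : Prop :=
  ∀ s ∈ I, ∀ μ : Fin n,
    deriv (deriv (fun t => X t μ)) s
      + ∑ ν, ∑ σ, Γ (X s) μ ν σ * deriv (fun t => X t ν) s * deriv (fun t => X t σ) s = 0

/-- The generalized Jacobi operator `G^μ[ξ](s)` along the curve `X` for the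
connection coefficients `Γ`. -/
def genJacobiOp {n : ℕ} (Γ : (Fin n → ℝ) → Fin n → Fin n → Fin n → ℝ)
    (X ξ : ℝ → Fin n → ℝ) (μ : Fin n) (s : ℝ) : ℝ :=
  deriv (deriv (fun t => ξ t μ)) s
    + (∑ ν, ∑ σ, Γ (X s) μ ν σ *
        (2 * deriv (fun t => ξ t ν) s * deriv (fun t => X t σ) s
          + deriv (fun t => ξ t ν) s * deriv (fun t => ξ t σ) s))
    + ∑ ν, ∑ σ, ∑ α, pd α (fun x => Γ x μ ν σ) (X s) * ξ s α *
        (deriv (fun t => X t ν) s + deriv (fun t => ξ t ν) s) *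
        (deriv (fun t => X t σ) s + deriv (fun t => ξ t σ) s)

/-- `ξ` is a generalized Jacobi field along `X` on the interval `I`. -/
def IsGenJacobiField {n : ℕ} (Γ : (Fin n → ℝ) → Fin n → Fin n → Fin n → ℝ)
    (I : Set ℝ) (X ξ : ℝ → Fin n → ℝ) : Prop :=
  ∀ s ∈ I, ∀ μ : Fin n, genJacobiOp Γ X ξ μ s = 0

/-- `Γt` represents the transformed connection coefficients of `Γ` under the
coordinate change `φ`:
`(∂φ^λ/∂x^α) Γ^α_{νσ} = Γt^λ_{αβ}(φ x) (∂φ^α/∂x^ν)(∂φ^β/∂x^σ) + ∂²φ^λ/∂x^ν∂x^σ` on `U`. -/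
def TransformedConn {n : ℕ} (U : Set (Fin n → ℝ)) (φ : (Fin n → ℝ) → Fin n → ℝ)
    (Γ Γt : (Fin n → ℝ) → Fin n → Fin n → Fin n → ℝ) : Prop :=
  ∀ x ∈ U, ∀ lam ν σ : Fin n,
    ∑ α, pd α (fun y => φ y lam) x * Γ x α ν σ
      = (∑ α, ∑ β, Γt (φ x) lam α β * pd ν (fun y => φ y α) x * pd σ (fun y => φ y β) x)
        + pd ν (fun y => pd σ (fun z => φ z lam) y) x

/-- `φ` is a smooth diffeomorphism from the open set `U` onto the open set `φ '' U`. -/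
def IsDiffeoOn {n : ℕ} (φ : (Fin n → ℝ) → Fin n → ℝ) (U : Set (Fin n → ℝ)) : Prop :=
  ContDiffOn ℝ ∞ φ U ∧ IsOpen (φ '' U) ∧
    ∃ ψ : (Fin n → ℝ) → Fin n → ℝ, ContDiffOn ℝ ∞ ψ (φ '' U) ∧
      (∀ x ∈ U, ψ (φ x) = x) ∧ ∀ y ∈ φ '' U, ψ y ∈ U

/-- The quadratic remainder operator `Δ^μ[ξ](s)` along the curve `X` for the
connection coefficients `Γ`. -/
def deltaOp {n : ℕ} (Γ : (Fin n → ℝ) → Fin n → Fin n → Fin n → ℝ)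
    (X ξ : ℝ → Fin n → ℝ) (μ : Fin n) (s : ℝ) : ℝ :=
  (∑ ν, ∑ σ, Γ (X s) μ ν σ * deriv (fun t => ξ t ν) s * deriv (fun t => ξ t σ) s)
    + 2 * (∑ ν, ∑ σ, ∑ α, pd α (fun x => Γ x μ ν σ) (X s) * ξ s α *
        deriv (fun t => X t ν) s * deriv (fun t => ξ t σ) s)
    + ∑ ν, ∑ σ, ∑ α, pd α (fun x => Γ x μ ν σ) (X s) * ξ s α *
        deriv (fun t => ξ t ν) s * deriv (fun t => ξ t σ) s


namespace AffDelta
variable {n : ℕ}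

lemma sum_swap4 (f : Fin n → Fin n → Fin n → Fin n → ℝ) :
    ∑ ν, ∑ σ, ∑ a, ∑ b, f ν σ a b = ∑ a, ∑ b, ∑ ν, ∑ σ, f ν σ a b :=
  calc ∑ ν, ∑ σ, ∑ a, ∑ b, f ν σ a b
      = ∑ ν, ∑ a, ∑ σ, ∑ b, f ν σ a b :=
        Finset.sum_congr rfl fun _ _ => Finset.sum_comm
    _ = ∑ a, ∑ ν, ∑ σ, ∑ b, f ν σ a b := Finset.sum_comm
    _ = ∑ a, ∑ ν, ∑ b, ∑ σ, f ν σ a b :=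
        Finset.sum_congr rfl fun _ _ => Finset.sum_congr rfl fun _ _ => Finset.sum_comm
    _ = ∑ a, ∑ b, ∑ ν, ∑ σ, f ν σ a b :=
        Finset.sum_congr rfl fun _ _ => Finset.sum_comm

lemma sum_swap3 (f : Fin n → Fin n → Fin n → ℝ) :
    ∑ a, ∑ b, ∑ ρ, f a b ρ = ∑ ρ, ∑ a, ∑ b, f a b ρ :=
  calc ∑ a, ∑ b, ∑ ρ, f a b ρ
      = ∑ a, ∑ ρ, ∑ b, f a b ρ := Finset.sum_congr rfl fun _ _ => Finset.sum_comm
    _ = ∑ ρ, ∑ a, ∑ b, f a b ρ := Finset.sum_comm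

lemma J1 (A B E : Fin n → Fin n → ℝ) (w w' : Fin n → ℝ) :
    ∑ ν, ∑ σ, (∑ a, ∑ b, A a ν * B b σ * E a b) * w ν * w' σ
      = ∑ a, ∑ b, E a b * (∑ ν, A a ν * w ν) * (∑ σ, B b σ * w' σ) := by
  simp only [Finset.sum_mul, Finset.mul_sum]
  rw [sum_swap4]
  refine Finset.sum_congr rfl fun a _ => Finset.sum_congr rfl fun b _ => ?_
  rw [Finset.sum_comm]
  exact Finset.sum_congr rfl fun ν _ => Finset.sum_congr rfl fun σ _ => by ring

lemma K1 (Λ : Matrix (Fin n) (Fin n) ℝ) (G : Fin n → Fin n → ℝ) (w w' : Fin n → ℝ) :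
    ∑ ν, ∑ σ, w ν * w' σ * (∑ α, ∑ β, G α β * Λ α ν * Λ β σ)
      = ∑ α, ∑ β, G α β * (∑ ν, Λ α ν * w ν) * (∑ σ, Λ β σ * w' σ) := by
  simp only [Finset.sum_mul, Finset.mul_sum]
  rw [sum_swap4]
  refine Finset.sum_congr rfl fun a _ => Finset.sum_congr rfl fun b _ => ?_
  rw [Finset.sum_comm]
  exact Finset.sum_congr rfl fun ν _ => Finset.sum_congr rfl fun σ _ => by ring

lemma J2 (c : Fin n → ℝ) (S : Fin n → Fin n → Fin n → ℝ) (v v' : Fin n → ℝ) :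
    ∑ a, ∑ b, (∑ ρ, c ρ * S ρ a b) * v a * v' b
      = ∑ ρ, c ρ * ∑ a, ∑ b, S ρ a b * v a * v' b := by
  simp only [Finset.sum_mul, Finset.mul_sum]
  rw [sum_swap3]
  exact Finset.sum_congr rfl fun ρ _ => Finset.sum_congr rfl fun a _ =>
    Finset.sum_congr rfl fun b _ => by ring

lemma clm_apply_eq_sum (L : (Fin n → ℝ) →L[ℝ] ℝ) (u : Fin n → ℝ) :
    L u = ∑ α, L (Pi.single α 1) * u α := by
  conv_lhs => rw [← Finset.univ_sum_single u]
  rw [map_sum]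
  refine Finset.sum_congr rfl fun α _ => ?_
  have h : Pi.single α (u α) = u α • (Pi.single α (1:ℝ) : Fin n → ℝ) := by
    ext j; by_cases hj : j = α <;> simp [Pi.single_apply, hj]
  rw [h, map_smul, smul_eq_mul, mul_comm]

lemma pd_affine (Λ : Matrix (Fin n) (Fin n) ℝ) (C x : Fin n → ℝ) (lam ν : Fin n) :
    pd ν (fun y => (Λ.mulVec y + C) lam) x = Λ lam ν := by
  have h : HasFDerivAt (fun y : Fin n → ℝ => (Λ.mulVec y + C) lam)
      ((ContinuousLinearMap.proj lam).comp (Matrix.mulVecLin Λ).toContinuousLinearMap) x := by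
    have h1 : HasFDerivAt (fun y : Fin n → ℝ => Λ.mulVec y + C)
        (Matrix.mulVecLin Λ).toContinuousLinearMap x :=
      ((Matrix.mulVecLin Λ).toContinuousLinearMap.hasFDerivAt).add_const C
    exact ((ContinuousLinearMap.proj lam).hasFDerivAt).comp x h1
  rw [pd, h.fderiv]
  simp [Matrix.mulVec_single]

lemma pd_const (x : Fin n → ℝ) (ν : Fin n) (c : ℝ) :
    pd ν (fun _ : Fin n → ℝ => c) x = 0 := by
  rw [pd]; simp

lemma pd_affine_snd (Λ : Matrix (Fin n) (Fin n) ℝ) (C x : Fin n → ℝ) (lam ν σ : Fin n) :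
    pd ν (fun y => pd σ (fun z => (Λ.mulVec z + C) lam) y) x = 0 := by
  have h : (fun y => pd σ (fun z => (Λ.mulVec z + C) lam) y) = fun _ : Fin n → ℝ => Λ lam σ :=
    funext fun y => pd_affine Λ C y lam σ
  rw [pd, h]
  simp

lemma deriv_mulVec (Λ : Matrix (Fin n) (Fin n) ℝ) (c : ℝ → Fin n → ℝ) (s : ℝ)
    (hc : ∀ k, DifferentiableAt ℝ (fun t => c t k) s) (ν : Fin n) :
    deriv (fun t => Λ.mulVec (c t) ν) s
      = Λ.mulVec (fun k => deriv (fun t => c t k) s) ν := by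
  have h2 : ∀ v : Fin n → ℝ, Λ.mulVec v ν = ∑ k, Λ ν k * v k := fun v => by
    simp [Matrix.mulVec, dotProduct]
  simp only [h2]
  exact (HasDerivAt.fun_sum fun k _ => ((hc k).hasDerivAt.const_mul (Λ ν k))).deriv

lemma deriv_mulVec_add (Λ : Matrix (Fin n) (Fin n) ℝ) (C : Fin n → ℝ) (c : ℝ → Fin n → ℝ)
    (s : ℝ) (hc : ∀ k, DifferentiableAt ℝ (fun t => c t k) s) (ν : Fin n) :
    deriv (fun t => (Λ.mulVec (c t) + C) ν) s
      = Λ.mulVec (fun k => deriv (fun t => c t k) s) ν := by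
  have h2 : ∀ v : Fin n → ℝ, (Λ.mulVec v + C) ν = Λ.mulVec v ν + C ν := fun v => rfl
  simp only [h2]
  rw [deriv_add_const]
  exact deriv_mulVec Λ c s hc ν

end AffDelta

open AffDelta in

/-- Under an invertible affine coordinate change `φ x = Λ x + C`, the
quadratic remainder operator transforms tensorially: `Δ̃^μ[Λξ](s) = Λ^μ_ν Δ^ν[ξ](s)`. -/
theorem affine_transform_deltaOp_tensorial
    {n : ℕ} (hn : 2 ≤ n) (U : Set (Fin n → ℝ)) (hU : IsOpen U)
    (Γ : (Fin n → ℝ) → Fin n → Fin n → Fin n → ℝ) (hΓ : IsConnCoeff U Γ)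
    (I : Set ℝ) (hIopen : IsOpen I) (hIint : I.OrdConnected)
    (X : ℝ → Fin n → ℝ) (hXU : ∀ s ∈ I, X s ∈ U) (hXsm : ContDiffOn ℝ ∞ X I)
    (Λ : Matrix (Fin n) (Fin n) ℝ) (hΛ : IsUnit Λ) (C : Fin n → ℝ)
    (Γt : (Fin n → ℝ) → Fin n → Fin n → Fin n → ℝ)
    (hΓt : TransformedConn U (fun x => Λ.mulVec x + C) Γ Γt) :
    ∀ (ξ : ℝ → Fin n → ℝ), ContDiffOn ℝ ∞ ξ I → ∀ s ∈ I, ∀ μ : Fin n,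
      deltaOp Γt (fun t => Λ.mulVec (X t) + C) (fun t => Λ.mulVec (ξ t)) μ s
        = ∑ ν, Λ μ ν * deltaOp Γ X ξ ν s := by
  intro ξ hξ s hs μ
  obtain ⟨hΓsm, -⟩ := hΓ
  have hx0 : X s ∈ U := hXU s hs
  obtain ⟨uu, huu⟩ := hΛ
  set M : Matrix (Fin n) (Fin n) ℝ := ↑uu⁻¹ with hMdef
  have hMΛ : M * Λ = 1 := by rw [hMdef, ← huu]; exact uu.inv_mul
  have hΛM : Λ * M = 1 := by rw [hMdef, ← huu]; exact uu.mul_inv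
  have hmv : ∀ (A : Matrix (Fin n) (Fin n) ℝ) (w : Fin n → ℝ) (a : Fin n),
      ∑ k, A a k * w k = A.mulVec w a := fun A w a => by
    simp [Matrix.mulVec, dotProduct]
  have hMΛvec : ∀ v : Fin n → ℝ, M.mulVec (Λ.mulVec v) = v := fun v => by
    rw [Matrix.mulVec_mulVec, hMΛ, Matrix.one_mulVec]
  have contrM : ∀ (v : Fin n → ℝ) (a : Fin n), ∑ k, M a k * Λ.mulVec v k = v a := by
    intro v a; rw [hmv]; rw [hMΛvec]
  set ψ : (Fin n → ℝ) → Fin n → ℝ := fun y => M.mulVec (y - C) with hψdef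
  have hψφ : ∀ x, ψ (Λ.mulVec x + C) = x := fun x => by
    rw [hψdef]; simp only [add_sub_cancel_right]; exact hMΛvec x
  have hφψ : ∀ y, Λ.mulVec (ψ y) + C = y := fun y => by
    rw [hψdef]; simp only [Matrix.mulVec_mulVec, hΛM, Matrix.one_mulVec, sub_add_cancel]
  have hψcont : Continuous ψ := by
    have : Continuous fun y : Fin n → ℝ => M.mulVec y :=
      (Matrix.mulVecLin M).continuous_of_finiteDimensional
    exact this.comp (continuous_id.sub continuous_const)
  have hVo : IsOpen (ψ ⁻¹' U) := hU.preimage hψcont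
  have hy0V : (Λ.mulVec (X s) + C) ∈ ψ ⁻¹' U := by
    simp only [Set.mem_preimage, hψφ]; exact hx0
  -- cleaned transformation law
  have hT : ∀ x ∈ U, ∀ lam ν σ : Fin n, ∑ ρ, Λ lam ρ * Γ x ρ ν σ
      = ∑ α, ∑ β, Γt (Λ.mulVec x + C) lam α β * Λ α ν * Λ β σ := by
    intro x hx lam ν σ
    have h := hΓt x hx lam ν σ
    simp only [pd_affine, pd_const, add_zero] at h
    exact h
  -- kronecker
  have hδ : ∀ α a : Fin n, (∑ ν, Λ α ν * M ν a) = if α = a then (1:ℝ) else 0 := by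
    intro α a
    rw [show (∑ ν, Λ α ν * M ν a) = (Λ * M) α a from (Matrix.mul_apply).symm, hΛM,
      Matrix.one_apply]
  -- inversion formula
  have hinv : ∀ y ∈ ψ ⁻¹' U, ∀ lam a b : Fin n, Γt y lam a b
      = ∑ ν, ∑ σ, M ν a * M σ b * (∑ ρ, Λ lam ρ * Γ (ψ y) ρ ν σ) := by
    intro y hy lam a b
    have h1 : ∀ ν σ : Fin n, ∑ ρ, Λ lam ρ * Γ (ψ y) ρ ν σ
        = ∑ α, ∑ β, Γt y lam α β * Λ α ν * Λ β σ := by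
      intro ν σ
      have h2 := hT (ψ y) hy lam ν σ
      rwa [hφψ y] at h2
    symm
    calc ∑ ν, ∑ σ, M ν a * M σ b * (∑ ρ, Λ lam ρ * Γ (ψ y) ρ ν σ)
        = ∑ ν, ∑ σ, M ν a * M σ b * (∑ α, ∑ β, Γt y lam α β * Λ α ν * Λ β σ) :=
          Finset.sum_congr rfl fun ν _ => Finset.sum_congr rfl fun σ _ => by rw [h1]
      _ = ∑ α, ∑ β, Γt y lam α β * (∑ ν, Λ α ν * M ν a) * (∑ σ, Λ β σ * M σ b) :=
          K1 Λ (fun α β => Γt y lam α β) (fun ν => M ν a) (fun σ => M σ b)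
      _ = Γt y lam a b := by
          simp only [hδ, mul_ite, mul_one, mul_zero, ite_mul, zero_mul,
            Finset.sum_ite_eq', Finset.mem_univ, if_true]
  -- differentiability of Γ components
  have hΓdiff : ∀ ρ a b : Fin n, DifferentiableAt ℝ (fun z => Γ z ρ a b) (X s) := fun ρ a b =>
    ((hΓsm ρ a b).contDiffAt (hU.mem_nhds hx0)).differentiableAt (by simp)
  set L : Fin n → Fin n → Fin n → ((Fin n → ℝ) →L[ℝ] ℝ) := fun lam a b =>
    ∑ ν, ∑ σ, (M ν a * M σ b) • (∑ ρ, (Λ lam ρ) • fderiv ℝ (fun z => Γ z ρ ν σ) (X s))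
    with hLdef
  have hgD : ∀ lam a b : Fin n, HasFDerivAt
      (fun x => ∑ ν, ∑ σ, M ν a * M σ b * (∑ ρ, Λ lam ρ * Γ x ρ ν σ)) (L lam a b) (X s) := by
    intro lam a b
    rw [hLdef]
    exact HasFDerivAt.fun_sum fun ν _ => HasFDerivAt.fun_sum fun σ _ =>
      (HasFDerivAt.fun_sum fun ρ _ =>
        ((hΓdiff ρ ν σ).hasFDerivAt.const_mul (Λ lam ρ))).const_mul _
  set Mclm := (Matrix.mulVecLin M).toContinuousLinearMap with hMclmdef
  have hψD : HasFDerivAt ψ Mclm (Λ.mulVec (X s) + C) := by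
    have h1 : HasFDerivAt (fun y : Fin n → ℝ => y - C)
        (ContinuousLinearMap.id ℝ (Fin n → ℝ)) (Λ.mulVec (X s) + C) :=
      (hasFDerivAt_id _).sub_const C
    have h2 := Mclm.hasFDerivAt.comp (Λ.mulVec (X s) + C) h1
    have hfun : (⇑Mclm ∘ fun y : Fin n → ℝ => y - C) = ψ := by
      funext y
      simp [hψdef, hMclmdef, Matrix.mulVecLin_apply, Function.comp]
    rw [hfun, ContinuousLinearMap.comp_id] at h2
    exact h2
  have hΓtD : ∀ lam a b : Fin n, HasFDerivAt (fun y => Γt y lam a b)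
      ((L lam a b).comp Mclm) (Λ.mulVec (X s) + C) := by
    intro lam a b
    have hg := hgD lam a b
    have hψx : ψ (Λ.mulVec (X s) + C) = X s := hψφ (X s)
    rw [← hψx] at hg
    have hcomp := hg.comp (Λ.mulVec (X s) + C) hψD
    refine hcomp.congr_of_eventuallyEq ?_
    filter_upwards [hVo.mem_nhds hy0V] with y hy
    simpa [Function.comp] using hinv y hy lam a b
  have hLapply : ∀ lam a b : Fin n, ∀ v : Fin n → ℝ, (L lam a b) v
      = ∑ ν, ∑ σ, M ν a * M σ b *
          (∑ ρ, Λ lam ρ * (fderiv ℝ (fun z => Γ z ρ ν σ) (X s) v)) := by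
    intro lam a b v
    rw [hLdef]
    simp [ContinuousLinearMap.sum_apply, ContinuousLinearMap.smul_apply, smul_eq_mul]
  have hDfsum : ∀ ρ a b : Fin n, fderiv ℝ (fun z => Γ z ρ a b) (X s) (ξ s)
      = ∑ β, pd β (fun z => Γ z ρ a b) (X s) * ξ s β := fun ρ a b =>
    clm_apply_eq_sum _ (ξ s)
  -- contracted derivative of Γt
  have hQ : ∀ ν σ : Fin n,
      (∑ α, pd α (fun y => Γt y μ ν σ) (Λ.mulVec (X s) + C) * Λ.mulVec (ξ s) α)
      = ∑ a, ∑ b, M a ν * M b σ *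
          (∑ ρ, Λ μ ρ * (∑ β, pd β (fun z => Γ z ρ a b) (X s) * ξ s β)) := by
    intro ν σ
    have hpd : ∀ α, pd α (fun y => Γt y μ ν σ) (Λ.mulVec (X s) + C)
        = ((L μ ν σ).comp Mclm) (Pi.single α 1) := fun α => by
      rw [pd, (hΓtD μ ν σ).fderiv]
    calc ∑ α, pd α (fun y => Γt y μ ν σ) (Λ.mulVec (X s) + C) * Λ.mulVec (ξ s) α
        = ∑ α, ((L μ ν σ).comp Mclm) (Pi.single α 1) * Λ.mulVec (ξ s) α :=
          Finset.sum_congr rfl fun α _ => by rw [hpd]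
      _ = ((L μ ν σ).comp Mclm) (Λ.mulVec (ξ s)) := (clm_apply_eq_sum _ _).symm
      _ = (L μ ν σ) (ξ s) := by
          rw [ContinuousLinearMap.comp_apply]
          congr 1
          show M.mulVec (Λ.mulVec (ξ s)) = ξ s
          exact hMΛvec (ξ s)
      _ = ∑ a, ∑ b, M a ν * M b σ *
            (∑ ρ, Λ μ ρ * (∑ β, pd β (fun z => Γ z ρ a b) (X s) * ξ s β)) := by
          rw [hLapply]
          exact Finset.sum_congr rfl fun a _ => Finset.sum_congr rfl fun b _ => by
            rw [Finset.sum_congr rfl fun ρ _ => by rw [hDfsum ρ a b]]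
  -- value of Γt at base point
  have h3 : ∀ ν σ : Fin n, Γt (Λ.mulVec (X s) + C) μ ν σ
      = ∑ a, ∑ b, M a ν * M b σ * (∑ ρ, Λ μ ρ * Γ (X s) ρ a b) := by
    intro ν σ
    have h := hinv _ hy0V μ ν σ
    rwa [hψφ (X s)] at h
  -- curve coordinate differentiability
  have hXd : ∀ k, DifferentiableAt ℝ (fun t => X t k) s := by
    have h := (hXsm.contDiffAt (hIopen.mem_nhds hs)).differentiableAt (by simp)
    exact fun k => (differentiableAt_pi.mp h) k
  have hξd : ∀ k, DifferentiableAt ℝ (fun t => ξ t k) s := by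
    have h := (hξ.contDiffAt (hIopen.mem_nhds hs)).differentiableAt (by simp)
    exact fun k => (differentiableAt_pi.mp h) k
  -- unfold and rewrite derivatives
  simp only [deltaOp]
  simp only [deriv_mulVec_add Λ C X s hXd, deriv_mulVec Λ ξ s hξd]
  -- term 1
  have e1 : (∑ ν, ∑ σ, Γt (Λ.mulVec (X s) + C) μ ν σ *
        Λ.mulVec (fun k => deriv (fun t => ξ t k) s) ν *
        Λ.mulVec (fun k => deriv (fun t => ξ t k) s) σ)
      = ∑ ρ, Λ μ ρ * ∑ a, ∑ b, Γ (X s) ρ a b *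
          deriv (fun t => ξ t a) s * deriv (fun t => ξ t b) s := by
    calc ∑ ν, ∑ σ, Γt (Λ.mulVec (X s) + C) μ ν σ *
          Λ.mulVec (fun k => deriv (fun t => ξ t k) s) ν *
          Λ.mulVec (fun k => deriv (fun t => ξ t k) s) σ
        = ∑ ν, ∑ σ, (∑ a, ∑ b, M a ν * M b σ * (∑ ρ, Λ μ ρ * Γ (X s) ρ a b)) *
            Λ.mulVec (fun k => deriv (fun t => ξ t k) s) ν *
            Λ.mulVec (fun k => deriv (fun t => ξ t k) s) σ :=
          Finset.sum_congr rfl fun ν _ => Finset.sum_congr rfl fun σ _ => by rw [h3]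
      _ = ∑ a, ∑ b, (∑ ρ, Λ μ ρ * Γ (X s) ρ a b) *
            (∑ ν, M a ν * Λ.mulVec (fun k => deriv (fun t => ξ t k) s) ν) *
            (∑ σ, M b σ * Λ.mulVec (fun k => deriv (fun t => ξ t k) s) σ) :=
          J1 (fun a ν => M a ν) (fun b σ => M b σ) _ _ _
      _ = ∑ a, ∑ b, (∑ ρ, Λ μ ρ * Γ (X s) ρ a b) *
            deriv (fun t => ξ t a) s * deriv (fun t => ξ t b) s :=
          Finset.sum_congr rfl fun a _ => Finset.sum_congr rfl fun b _ => by
            rw [contrM, contrM]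
      _ = ∑ ρ, Λ μ ρ * ∑ a, ∑ b, Γ (X s) ρ a b *
            deriv (fun t => ξ t a) s * deriv (fun t => ξ t b) s := J2 _ _ _ _
  -- terms 2 and 3
  have e23 : ∀ v : ℝ → Fin n → ℝ,
      (∑ ν, ∑ σ, ∑ α, pd α (fun x => Γt x μ ν σ) (Λ.mulVec (X s) + C) * Λ.mulVec (ξ s) α *
        Λ.mulVec (fun k => deriv (fun t => v t k) s) ν *
        Λ.mulVec (fun k => deriv (fun t => ξ t k) s) σ)
      = ∑ ρ, Λ μ ρ * ∑ a, ∑ b,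
          (∑ β, pd β (fun z => Γ z ρ a b) (X s) * ξ s β) *
          deriv (fun t => v t a) s * deriv (fun t => ξ t b) s := by
    intro v
    calc ∑ ν, ∑ σ, ∑ α, pd α (fun x => Γt x μ ν σ) (Λ.mulVec (X s) + C) *
          Λ.mulVec (ξ s) α * Λ.mulVec (fun k => deriv (fun t => v t k) s) ν *
          Λ.mulVec (fun k => deriv (fun t => ξ t k) s) σ
        = ∑ ν, ∑ σ, (∑ α, pd α (fun x => Γt x μ ν σ) (Λ.mulVec (X s) + C) *
            Λ.mulVec (ξ s) α) * Λ.mulVec (fun k => deriv (fun t => v t k) s) ν *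
            Λ.mulVec (fun k => deriv (fun t => ξ t k) s) σ := by
          refine Finset.sum_congr rfl fun ν _ => Finset.sum_congr rfl fun σ _ => ?_
          rw [Finset.sum_mul, Finset.sum_mul]
      _ = ∑ ν, ∑ σ, (∑ a, ∑ b, M a ν * M b σ *
            (∑ ρ, Λ μ ρ * (∑ β, pd β (fun z => Γ z ρ a b) (X s) * ξ s β))) *
            Λ.mulVec (fun k => deriv (fun t => v t k) s) ν *
            Λ.mulVec (fun k => deriv (fun t => ξ t k) s) σ :=
          Finset.sum_congr rfl fun ν _ => Finset.sum_congr rfl fun σ _ => by rw [hQ]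
      _ = ∑ a, ∑ b, (∑ ρ, Λ μ ρ * (∑ β, pd β (fun z => Γ z ρ a b) (X s) * ξ s β)) *
            (∑ ν, M a ν * Λ.mulVec (fun k => deriv (fun t => v t k) s) ν) *
            (∑ σ, M b σ * Λ.mulVec (fun k => deriv (fun t => ξ t k) s) σ) :=
          J1 (fun a ν => M a ν) (fun b σ => M b σ) _ _ _
      _ = ∑ a, ∑ b, (∑ ρ, Λ μ ρ * (∑ β, pd β (fun z => Γ z ρ a b) (X s) * ξ s β)) *
            deriv (fun t => v t a) s * deriv (fun t => ξ t b) s :=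
          Finset.sum_congr rfl fun a _ => Finset.sum_congr rfl fun b _ => by
            rw [contrM, contrM]
      _ = ∑ ρ, Λ μ ρ * ∑ a, ∑ b,
            (∑ β, pd β (fun z => Γ z ρ a b) (X s) * ξ s β) *
            deriv (fun t => v t a) s * deriv (fun t => ξ t b) s := J2 _ _ _ _
  -- pull the inner sums on the RHS
  have pullX : ∀ ρ : Fin n,
      (∑ ν, ∑ σ, ∑ α, pd α (fun x => Γ x ρ ν σ) (X s) * ξ s α *
        deriv (fun t => X t ν) s * deriv (fun t => ξ t σ) s)
      = ∑ a, ∑ b, (∑ β, pd β (fun z => Γ z ρ a b) (X s) * ξ s β) *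
          deriv (fun t => X t a) s * deriv (fun t => ξ t b) s := fun ρ =>
    Finset.sum_congr rfl fun a _ => Finset.sum_congr rfl fun b _ => by
      rw [Finset.sum_mul, Finset.sum_mul]
  have pullXi : ∀ ρ : Fin n,
      (∑ ν, ∑ σ, ∑ α, pd α (fun x => Γ x ρ ν σ) (X s) * ξ s α *
        deriv (fun t => ξ t ν) s * deriv (fun t => ξ t σ) s)
      = ∑ a, ∑ b, (∑ β, pd β (fun z => Γ z ρ a b) (X s) * ξ s β) *
          deriv (fun t => ξ t a) s * deriv (fun t => ξ t b) s := fun ρ =>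
    Finset.sum_congr rfl fun a _ => Finset.sum_congr rfl fun b _ => by
      rw [Finset.sum_mul, Finset.sum_mul]
  rw [e1, e23 X, e23 ξ]
  rw [Finset.mul_sum, ← Finset.sum_add_distrib, ← Finset.sum_add_distrib]
  refine Finset.sum_congr rfl fun ρ _ => ?_
  rw [pullX ρ, pullXi ρ]
  ring
end
end

section
/- Let n ≥ 3, let Γ be smooth torsion-free connection coefficients on an open set U ⊆ ℝⁿ, let X : I → U be a geodesic, and let s₀ ∈ I. Then there exist an open subinterval I' ⊆ I containing s₀, a smooth map ξ : I' → ℝⁿ which is a generalized Jacobi field along X restricted to I' with respect to Γ, and a smooth diffeomorphism φ from an open neighborhood V ⊆ U of X(I') onto an open subset of ℝⁿ, such that the tensorially transformed map ξ̃(s) := Dφ(X(s)) ξ(s) is NOT a generalized Jacobi field along φ∘X with respect to the transformed connection coefficients Γ̃. -/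
open Set ContDiff

noncomputable section

def myPhi {n : ℕ} (κ κ' : Fin n) (c : ℝ) (x : Fin n → ℝ) : Fin n → ℝ :=
  fun μ => x μ + (if μ = κ' then 1 else 0) * ((x κ - c)^3/6)

def myPsi {n : ℕ} (κ κ' : Fin n) (c : ℝ) (y : Fin n → ℝ) : Fin n → ℝ :=
  fun μ => y μ - (if μ = κ' then 1 else 0) * ((y κ - c)^3/6)

lemma hasDerivAt_cube (c z : ℝ) : HasDerivAt (fun w : ℝ => (w - c)^3/6) ((z - c)^2/2) z := by
  have h : HasDerivAt (fun w : ℝ => (w - c)^3/6) ((3 * (z - c)^2 * 1)/6) z :=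
    (((hasDerivAt_id z).sub_const c).pow 3).div_const 6
  convert h using 1; ring

lemma hasFDerivAt_eval {n : ℕ} (κ : Fin n) (x : Fin n → ℝ) :
    HasFDerivAt (fun y : Fin n → ℝ => y κ)
      (ContinuousLinearMap.proj κ : (Fin n → ℝ) →L[ℝ] ℝ) x :=
  ((ContinuousLinearMap.proj κ : (Fin n → ℝ) →L[ℝ] ℝ)).hasFDerivAt.congr_fderiv rfl |>.congr_of_eventuallyEq (by filter_upwards with y; rfl)

lemma hasFDerivAt_comp_eval {n : ℕ} (κ : Fin n) (h : ℝ → ℝ) (h' : ℝ) (x : Fin n → ℝ)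
    (hd : HasDerivAt h h' (x κ)) :
    HasFDerivAt (fun y : Fin n → ℝ => h (y κ)) (h' • (ContinuousLinearMap.proj κ :
      (Fin n → ℝ) →L[ℝ] ℝ)) x :=
  hd.comp_hasFDerivAt x (hasFDerivAt_eval κ x)

lemma hasFDerivAt_myPhi {n : ℕ} (κ κ' : Fin n) (c : ℝ) (lam : Fin n) (x : Fin n → ℝ) :
    HasFDerivAt (fun y : Fin n → ℝ => myPhi κ κ' c y lam)
      ((ContinuousLinearMap.proj lam : (Fin n → ℝ) →L[ℝ] ℝ)
        + (if lam = κ' then 1 else 0) • (((x κ - c)^2/2) • (ContinuousLinearMap.proj κ :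
            (Fin n → ℝ) →L[ℝ] ℝ))) x := by
  unfold myPhi
  have h1 := (hasFDerivAt_eval lam x).add
    ((hasFDerivAt_comp_eval κ _ _ x (hasDerivAt_cube c (x κ))).const_mul
      (if lam = κ' then (1:ℝ) else 0))
  refine h1.congr_fderiv ?_
  ext y
  simp [smul_smul]

lemma pd_myPhi {n : ℕ} (κ κ' : Fin n) (c : ℝ) (lam μ : Fin n) (x : Fin n → ℝ) :
    pd μ (fun y => myPhi κ κ' c y lam) x
      = (if μ = lam then 1 else 0)
        + (if lam = κ' then 1 else 0) * (if μ = κ then 1 else 0) * ((x κ - c)^2/2) := by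
  rw [pd, (hasFDerivAt_myPhi κ κ' c lam x).fderiv]
  simp only [ContinuousLinearMap.add_apply, ContinuousLinearMap.smul_apply,
    ContinuousLinearMap.proj_apply, Pi.single_apply, smul_eq_mul]
  by_cases h1 : lam = μ <;> by_cases h2 : lam = κ' <;> by_cases h3 : κ = μ <;>
    simp [h1, h2, h3, eq_comm]

lemma pd_pd_myPhi {n : ℕ} (κ κ' : Fin n) (c : ℝ) (lam ν σ : Fin n) (x : Fin n → ℝ) :
    pd ν (fun y => pd σ (fun z => myPhi κ κ' c z lam) y) x
      = (if lam = κ' then 1 else 0) * (if σ = κ then 1 else 0) * (if ν = κ then 1 else 0)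
          * (x κ - c) := by
  have hfe : (fun y => pd σ (fun z => myPhi κ κ' c z lam) y)
      = fun y => (if σ = lam then 1 else 0)
        + ((if lam = κ' then 1 else 0) * (if σ = κ then 1 else 0))
          * ((y κ - c)^2/2) := by
    funext y
    rw [pd_myPhi]
  rw [hfe]
  have hsq : HasDerivAt (fun w : ℝ => (w - c)^2/2) (x κ - c) (x κ) := by
    have h : HasDerivAt (fun w : ℝ => (w - c)^2/2) ((2 * (x κ - c)^1 * 1)/2) (x κ) :=
      (((hasDerivAt_id (x κ)).sub_const c).pow 2).div_const 2
    convert h using 1; ring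
  have hF : HasFDerivAt (fun y : Fin n → ℝ => (if σ = lam then (1:ℝ) else 0)
        + ((if lam = κ' then (1:ℝ) else 0) * (if σ = κ then 1 else 0)) * ((y κ - c)^2/2))
      (((if lam = κ' then (1:ℝ) else 0) * (if σ = κ then 1 else 0)) •
        ((x κ - c) • (ContinuousLinearMap.proj κ : (Fin n → ℝ) →L[ℝ] ℝ))) x := by
    have h1 := ((hasFDerivAt_comp_eval κ _ _ x hsq).const_mul
      ((if lam = κ' then (1:ℝ) else 0) * (if σ = κ then 1 else 0))).const_add
      (if σ = lam then (1:ℝ) else 0)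
    convert h1 using 1
  rw [pd, hF.fderiv]
  simp only [ContinuousLinearMap.smul_apply, ContinuousLinearMap.proj_apply,
    Pi.single_apply, smul_eq_mul]
  by_cases h3 : κ = ν <;> simp [h3, eq_comm]

lemma myPhi_apply_kappa {n : ℕ} {κ κ' : Fin n} (hκ : κ' ≠ κ) (c : ℝ) (x : Fin n → ℝ) :
    myPhi κ κ' c x κ = x κ := by
  simp [myPhi, Ne.symm hκ]

lemma myPsi_myPhi {n : ℕ} {κ κ' : Fin n} (hκ : κ' ≠ κ) (c : ℝ) (x : Fin n → ℝ) :
    myPsi κ κ' c (myPhi κ κ' c x) = x := by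
  funext μ
  simp [myPsi, myPhi, Ne.symm hκ]

lemma myPhi_myPsi {n : ℕ} {κ κ' : Fin n} (hκ : κ' ≠ κ) (c : ℝ) (y : Fin n → ℝ) :
    myPhi κ κ' c (myPsi κ κ' c y) = y := by
  funext μ
  simp [myPhi, myPsi, Ne.symm hκ]

lemma contDiff_myPhi {n : ℕ} (κ κ' : Fin n) (c : ℝ) :
    ContDiff ℝ ∞ (myPhi κ κ' c) := by
  apply contDiff_pi.mpr
  intro μ
  exact (contDiff_apply ℝ ℝ μ).add
    (contDiff_const.mul ((((contDiff_apply ℝ ℝ κ).sub contDiff_const).pow 3).div_const 6))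

lemma contDiff_myPsi {n : ℕ} (κ κ' : Fin n) (c : ℝ) :
    ContDiff ℝ ∞ (myPsi κ κ' c) := by
  apply contDiff_pi.mpr
  intro μ
  exact (contDiff_apply ℝ ℝ μ).sub
    (contDiff_const.mul ((((contDiff_apply ℝ ℝ κ).sub contDiff_const).pow 3).div_const 6))

/-- auxiliary quantity for the transformed connection -/
def GtH {n : ℕ} (κ κ' : Fin n) (c : ℝ) (Γ : (Fin n → ℝ) → Fin n → Fin n → Fin n → ℝ)
    (y : Fin n → ℝ) (lam ν σ : Fin n) : ℝ :=
  Γ (myPsi κ κ' c y) lam ν σ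
    + (if lam = κ' then 1 else 0) * ((y κ - c)^2/2) * Γ (myPsi κ κ' c y) κ ν σ
    - (if lam = κ' then 1 else 0) * (if ν = κ then 1 else 0) * (if σ = κ then 1 else 0)
        * (y κ - c)

/-- the transformed connection coefficients -/
def Gt {n : ℕ} (κ κ' : Fin n) (c : ℝ) (Γ : (Fin n → ℝ) → Fin n → Fin n → Fin n → ℝ)
    (y : Fin n → ℝ) (lam α β : Fin n) : ℝ :=
  GtH κ κ' c Γ y lam α β
    - ((y κ - c)^2/2) * (if α = κ then 1 else 0) * GtH κ κ' c Γ y lam κ' β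
    - ((y κ - c)^2/2) * (if β = κ then 1 else 0) * GtH κ κ' c Γ y lam α κ'
    + ((y κ - c)^2/2)^2 * (if α = κ then 1 else 0) * (if β = κ then 1 else 0)
        * GtH κ κ' c Γ y lam κ' κ'

lemma sum_collapse_mixed {n : ℕ} (G : Fin n → ℝ) (a b : Fin n) (d : ℝ) :
    (∑ β, G β * ((if a = β then 1 else 0) + (if β = b then 1 else 0) * d)) = G a + d * G b := by
  have h : ∀ β : Fin n, G β * ((if a = β then 1 else 0) + (if β = b then 1 else 0) * d)
      = (if a = β then G β else 0) + (if β = b then d * G β else 0) := by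
    intro β; by_cases h1 : a = β <;> by_cases h2 : β = b <;> simp_all <;> ring
  rw [Finset.sum_congr rfl fun β _ => h β, Finset.sum_add_distrib,
    Finset.sum_ite_eq, Finset.sum_ite_eq']
  simp

lemma sum_collapse_pair' {n : ℕ} (G : Fin n → ℝ) (a b : Fin n) (d : ℝ) :
    (∑ β, G β * ((if β = a then 1 else 0) + (if β = b then 1 else 0) * d)) = G a + d * G b := by
  have h : ∀ β : Fin n, G β * ((if β = a then 1 else 0) + (if β = b then 1 else 0) * d)
      = (if β = a then G β else 0) + (if β = b then d * G β else 0) := by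
    intro β; by_cases h1 : β = a <;> by_cases h2 : β = b <;> simp_all <;> ring
  rw [Finset.sum_congr rfl fun β _ => h β, Finset.sum_add_distrib,
    Finset.sum_ite_eq', Finset.sum_ite_eq']
  simp

lemma GtH_myPhi {n : ℕ} {κ κ' : Fin n} (hκ : κ' ≠ κ) (c : ℝ)
    (Γ : (Fin n → ℝ) → Fin n → Fin n → Fin n → ℝ) (x : Fin n → ℝ) (lam ν σ : Fin n) :
    GtH κ κ' c Γ (myPhi κ κ' c x) lam ν σ
      = Γ x lam ν σ + (if lam = κ' then 1 else 0) * ((x κ - c)^2/2) * Γ x κ ν σ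
        - (if lam = κ' then 1 else 0) * (if ν = κ then 1 else 0) * (if σ = κ then 1 else 0)
            * (x κ - c) := by
  rw [GtH, myPsi_myPhi hκ, myPhi_apply_kappa hκ]

lemma transformedConn_myPhi {n : ℕ} {κ κ' : Fin n} (hκ : κ' ≠ κ) (c : ℝ)
    (Γ : (Fin n → ℝ) → Fin n → Fin n → Fin n → ℝ) (x : Fin n → ℝ) (lam ν σ : Fin n) :
    ∑ α, pd α (fun y => myPhi κ κ' c y lam) x * Γ x α ν σ
      = (∑ α, ∑ β, Gt κ κ' c Γ (myPhi κ κ' c x) lam α β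
            * pd ν (fun y => myPhi κ κ' c y α) x * pd σ (fun y => myPhi κ κ' c y β) x)
        + pd ν (fun y => pd σ (fun z => myPhi κ κ' c z lam) y) x := by
  -- LHS
  have hL : (∑ α, pd α (fun y => myPhi κ κ' c y lam) x * Γ x α ν σ)
      = Γ x lam ν σ + ((if lam = κ' then 1 else 0) * ((x κ - c)^2/2)) * Γ x κ ν σ := by
    have h1 : ∀ α : Fin n, pd α (fun y => myPhi κ κ' c y lam) x * Γ x α ν σ
        = Γ x α ν σ * ((if α = lam then 1 else 0)
            + (if α = κ then 1 else 0) * ((if lam = κ' then 1 else 0) * ((x κ - c)^2/2))) := by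
      intro α; rw [pd_myPhi]; ring
    rw [Finset.sum_congr rfl fun α _ => h1 α, sum_collapse_pair']
  rw [hL]
  set y := myPhi κ κ' c x with hy
  have hR : (∑ α, ∑ β, Gt κ κ' c Γ y lam α β
        * pd ν (fun z => myPhi κ κ' c z α) x * pd σ (fun z => myPhi κ κ' c z β) x)
      = Gt κ κ' c Γ y lam ν σ
        + ((if σ = κ then 1 else 0) * ((x κ - c)^2/2)) * Gt κ κ' c Γ y lam ν κ'
        + ((if ν = κ then 1 else 0) * ((x κ - c)^2/2)) * (Gt κ κ' c Γ y lam κ' σ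
            + ((if σ = κ then 1 else 0) * ((x κ - c)^2/2)) * Gt κ κ' c Γ y lam κ' κ') := by
    have hinner : ∀ α : Fin n, (∑ β, Gt κ κ' c Γ y lam α β
          * pd ν (fun z => myPhi κ κ' c z α) x * pd σ (fun z => myPhi κ κ' c z β) x)
        = (Gt κ κ' c Γ y lam α σ
            + ((if σ = κ then 1 else 0) * ((x κ - c)^2/2)) * Gt κ κ' c Γ y lam α κ')
            * pd ν (fun z => myPhi κ κ' c z α) x := by
      intro α
      have h2 : ∀ β : Fin n, Gt κ κ' c Γ y lam α β
            * pd ν (fun z => myPhi κ κ' c z α) x * pd σ (fun z => myPhi κ κ' c z β) x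
          = (Gt κ κ' c Γ y lam α β * pd ν (fun z => myPhi κ κ' c z α) x)
              * ((if σ = β then 1 else 0)
                + (if β = κ' then 1 else 0) * ((if σ = κ then 1 else 0) * ((x κ - c)^2/2))) := by
        intro β; rw [pd_myPhi κ κ' c β σ]; ring
      rw [Finset.sum_congr rfl fun β _ => h2 β,
        sum_collapse_mixed (fun β => Gt κ κ' c Γ y lam α β
          * pd ν (fun z => myPhi κ κ' c z α) x) σ κ']
      ring
    rw [Finset.sum_congr rfl fun α _ => hinner α]
    have h3 : ∀ α : Fin n, (Gt κ κ' c Γ y lam α σ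
          + ((if σ = κ then 1 else 0) * ((x κ - c)^2/2)) * Gt κ κ' c Γ y lam α κ')
            * pd ν (fun z => myPhi κ κ' c z α) x
        = (Gt κ κ' c Γ y lam α σ
            + ((if σ = κ then 1 else 0) * ((x κ - c)^2/2)) * Gt κ κ' c Γ y lam α κ')
            * ((if ν = α then 1 else 0)
              + (if α = κ' then 1 else 0) * ((if ν = κ then 1 else 0) * ((x κ - c)^2/2))) := by
      intro α; rw [pd_myPhi κ κ' c α ν]; ring
    rw [Finset.sum_congr rfl fun α _ => h3 α,
      sum_collapse_mixed (fun α => Gt κ κ' c Γ y lam α σ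
        + ((if σ = κ then 1 else 0) * ((x κ - c)^2/2)) * Gt κ κ' c Γ y lam α κ') ν κ']
  rw [hR, pd_pd_myPhi]
  have hyk : y κ - c = x κ - c := by rw [hy, myPhi_apply_kappa hκ]
  simp only [Gt, hy, GtH_myPhi hκ, myPhi_apply_kappa hκ, if_neg hκ]
  by_cases hν : ν = κ <;> by_cases hσ : σ = κ <;> simp [hν, hσ] <;> ring


lemma Gt_myPhi_center {n : ℕ} {κ κ' : Fin n} (hκ : κ' ≠ κ)
    (Γ : (Fin n → ℝ) → Fin n → Fin n → Fin n → ℝ) {c : ℝ} {x : Fin n → ℝ} (hx : x κ = c)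
    (lam α β : Fin n) : Gt κ κ' c Γ (myPhi κ κ' c x) lam α β = Γ x lam α β := by
  simp [Gt, GtH_myPhi hκ, myPhi_apply_kappa hκ, hx]

lemma Gt_def {n : ℕ} (κ κ' : Fin n) (c : ℝ) (Γ : (Fin n → ℝ) → Fin n → Fin n → Fin n → ℝ)
    (y : Fin n → ℝ) (lam α β : Fin n) : Gt κ κ' c Γ y lam α β =
  GtH κ κ' c Γ y lam α β
    - ((y κ - c)^2/2) * (if α = κ then 1 else 0) * GtH κ κ' c Γ y lam κ' β
    - ((y κ - c)^2/2) * (if β = κ then 1 else 0) * GtH κ κ' c Γ y lam α κ'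
    + ((y κ - c)^2/2)^2 * (if α = κ then 1 else 0) * (if β = κ then 1 else 0)
        * GtH κ κ' c Γ y lam κ' κ' := rfl

lemma myPhi_def {n : ℕ} (κ κ' : Fin n) (c : ℝ) (x : Fin n → ℝ) : myPhi κ κ' c x =
  fun μ => x μ + (if μ = κ' then 1 else 0) * ((x κ - c)^3/6) := rfl

lemma hasDerivAt_h (c z : ℝ) :
    HasDerivAt (fun y : ℝ => (y - c)^3/6) ((z - c)^2/2) z := hasDerivAt_cube c z

lemma isDiffeoOn_myPhi {n : ℕ} {κ κ' : Fin n} (hκ : κ' ≠ κ) (c : ℝ)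
    (V : Set (Fin n → ℝ)) (hV : IsOpen V) : IsDiffeoOn (myPhi κ κ' c) V := by
  have himg : myPhi κ κ' c '' V = myPsi κ κ' c ⁻¹' V := by
    ext y
    constructor
    · rintro ⟨x, hx, rfl⟩
      rw [Set.mem_preimage, myPsi_myPhi hκ]
      exact hx
    · intro hy
      exact ⟨myPsi κ κ' c y, hy, myPhi_myPsi hκ c y⟩
  refine ⟨(contDiff_myPhi κ κ' c).contDiffOn, ?_, myPsi κ κ' c,
    (contDiff_myPsi κ κ' c).contDiffOn, fun x _ => myPsi_myPhi hκ c x, ?_⟩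
  · rw [himg]
    exact hV.preimage (contDiff_myPsi κ κ' c).continuous
  · rintro y ⟨x, hx, rfl⟩
    rw [myPsi_myPhi hκ]
    exact hx

-- scalar helper derivatives
lemma hasDerivAt_g (c z : ℝ) :
    HasDerivAt (fun y : ℝ => (y - c)^2/2*(c+1-y)) ((z-c)*(c+1-z) - (z-c)^2/2) z := by
  have h := ((((hasDerivAt_id z).sub_const c).pow 2).div_const 2).mul
    (((hasDerivAt_const z (c+1))).sub (hasDerivAt_id z))
  exact h.congr_deriv (by simp; ring)

lemma hasDerivAt_g' (c z : ℝ) :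
    HasDerivAt (fun y : ℝ => (y-c)*(c+1-y) - (y-c)^2/2) ((c+1-z) - (z-c) - (z-c)) z := by
  have h := ((((hasDerivAt_id z).sub_const c)).mul
    (((hasDerivAt_const z (c+1))).sub (hasDerivAt_id z))).sub
    ((((hasDerivAt_id z).sub_const c).pow 2).div_const 2)
  exact h.congr_deriv (by simp; ring)


lemma caseA_key {n : ℕ} (κ κ' : Fin n) (hκ : κ' ≠ κ)
    (Γ : (Fin n → ℝ) → Fin n → Fin n → Fin n → ℝ)
    (I : Set ℝ) (hIopen : IsOpen I)
    (X : ℝ → Fin n → ℝ) (hXsm : ContDiffOn ℝ ∞ X I)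
    (hXgeo : IsGeodesic Γ I X) (s₁ : ℝ) (hs₁ : s₁ ∈ I) :
    genJacobiOp (Gt κ κ' (X s₁ κ) Γ) (fun s => myPhi κ κ' (X s₁ κ) (X s))
      (fun s μ => ∑ ν, pd ν (fun y => myPhi κ κ' (X s₁ κ) y μ) (X s) *
        ((X s₁ ν + (if ν = κ then 1 else 0)) - X s ν)) κ' s₁
      = (deriv (fun t => X t κ) s₁)^2 := by
  set c := X s₁ κ with hc
  -- basic differentiability of components
  have hcomp : ∀ μ : Fin n, ContDiffOn ℝ ∞ (fun t => X t μ) I := by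
    intro μ; exact (contDiffOn_pi.mp hXsm) μ
  have hXd : ∀ (μ : Fin n), ∀ s ∈ I, HasDerivAt (fun t => X t μ)
      (deriv (fun t => X t μ) s) s := by
    intro μ s hs
    exact (((hcomp μ).differentiableOn (by norm_num)).differentiableAt
      (hIopen.mem_nhds hs)).hasDerivAt
  have hXd2 : ∀ (μ : Fin n), HasDerivAt (deriv (fun t => X t μ))
      (deriv (deriv (fun t => X t μ)) s₁) s₁ := by
    intro μ
    have h2 := ((contDiffOn_infty_iff_deriv_of_isOpen hIopen).mp (hcomp μ)).2
    exact ((h2.differentiableOn (by norm_num)).differentiableAt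
      (hIopen.mem_nhds hs₁)).hasDerivAt
  set v : Fin n → ℝ := fun μ => deriv (fun t => X t μ) s₁ with hv
  set d2 : Fin n → ℝ := fun μ => deriv (deriv (fun t => X t μ)) s₁ with hd2
  set a : Fin n → ℝ := fun μ => X s₁ μ + (if μ = κ then 1 else 0) with ha
  -- the transformed field in closed form
  set E : ℝ → Fin n → ℝ := fun s μ => (a μ - X s μ)
    + (if μ = κ' then 1 else 0) * ((X s κ - c)^2/2*(c+1-X s κ)) with hE
  have hEeq : (fun s μ => ∑ ν, pd ν (fun y => myPhi κ κ' c y μ) (X s) *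
      ((X s₁ ν + (if ν = κ then 1 else 0)) - X s ν)) = E := by
    funext s μ
    have h1 : ∀ ν : Fin n, pd ν (fun y => myPhi κ κ' c y μ) (X s) *
        ((X s₁ ν + (if ν = κ then 1 else 0)) - X s ν)
        = (a ν - X s ν) * ((if ν = μ then 1 else 0)
            + (if ν = κ then 1 else 0)
              * ((if μ = κ' then 1 else 0) * ((X s κ - c)^2/2))) := by
      intro ν; rw [pd_myPhi, ha]; ring
    rw [Finset.sum_congr rfl fun ν _ => h1 ν, sum_collapse_pair']
    have hak : a κ = c + 1 := by simp [ha, hc]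
    rw [hak]
    simp only [hE]
    ring
  rw [hEeq]
  -- derivatives of E
  have hEd : ∀ (μ : Fin n), ∀ s ∈ I, HasDerivAt (fun t => E t μ)
      (-deriv (fun t => X t μ) s + (if μ = κ' then 1 else 0)
        * (((X s κ - c)*(c+1-X s κ) - (X s κ - c)^2/2) * deriv (fun t => X t κ) s)) s := by
    intro μ s hs
    have h1 : HasDerivAt (fun t => a μ - X t μ) (-deriv (fun t => X t μ) s) s :=
      (hXd μ s hs).const_sub (a μ)
    have h2 : HasDerivAt (fun t => (X t κ - c)^2/2*(c+1-X t κ))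
        (((X s κ - c)*(c+1-X s κ) - (X s κ - c)^2/2) * deriv (fun t => X t κ) s) s :=
      by have := (hasDerivAt_g c (X s κ)).comp s (hXd κ s hs); exact this
    exact h1.add (h2.const_mul _)
  have hEderiv : ∀ (μ : Fin n), ∀ s ∈ I, deriv (fun t => E t μ) s
      = -deriv (fun t => X t μ) s + (if μ = κ' then 1 else 0)
        * (((X s κ - c)*(c+1-X s κ) - (X s κ - c)^2/2) * deriv (fun t => X t κ) s) :=
    fun μ s hs => (hEd μ s hs).deriv
  have hEd1 : ∀ μ : Fin n, deriv (fun t => E t μ) s₁ = -(v μ) := by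
    intro μ
    rw [hEderiv μ s₁ hs₁, ← hc]
    simp [hv]
  -- derivatives of the transformed curve
  have hPd : ∀ (ν : Fin n), ∀ s ∈ I, HasDerivAt (fun t => myPhi κ κ' c (X t) ν)
      (deriv (fun t => X t ν) s + (if ν = κ' then 1 else 0)
        * (((X s κ - c)^2/2) * deriv (fun t => X t κ) s)) s := by
    intro ν s hs
    have h2 : HasDerivAt (fun t => ((X t κ - c)^3/6))
        (((X s κ - c)^2/2) * deriv (fun t => X t κ) s) s :=
      by have := (hasDerivAt_h c (X s κ)).comp s (hXd κ s hs); exact this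
    have h3 := (hXd ν s hs).add (h2.const_mul (if ν = κ' then (1:ℝ) else 0))
    simp only [myPhi_def]
    exact h3
  have hPd1 : ∀ ν : Fin n, deriv (fun t => myPhi κ κ' c (X t) ν) s₁ = v ν := by
    intro ν
    rw [(hPd ν s₁ hs₁).deriv, ← hc]
    simp [hv]
  -- second derivative of E κ'
  have hD2 : deriv (deriv (fun t => E t κ')) s₁ = -(d2 κ') + (v κ)^2 := by
    have heq : deriv (fun t => E t κ') =ᶠ[nhds s₁] fun s =>
        -deriv (fun t => X t κ') s + ((X s κ - c)*(c+1-X s κ) - (X s κ - c)^2/2)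
          * deriv (fun t => X t κ) s := by
      filter_upwards [hIopen.mem_nhds hs₁] with s hs
      rw [hEderiv κ' s hs]; simp
    rw [heq.deriv_eq]
    have h1 : HasDerivAt (fun s => -deriv (fun t => X t κ') s) (-(d2 κ')) s₁ := (hXd2 κ').neg
    have h2 : HasDerivAt (fun s => ((X s κ - c)*(c+1-X s κ) - (X s κ - c)^2/2))
        (((c+1-X s₁ κ) - (X s₁ κ-c) - (X s₁ κ-c)) * deriv (fun t => X t κ) s₁) s₁ :=
      by have := (hasDerivAt_g' c (X s₁ κ)).comp s₁ (hXd κ s₁ hs₁); exact this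
    have h3 := h1.add (h2.mul (hXd2 κ))
    have h4 : deriv (fun s => -deriv (fun t => X t κ') s + ((X s κ - c)*(c+1-X s κ) - (X s κ - c)^2/2) * deriv (fun t => X t κ) s) s₁ = _ := h3.deriv
    rw [h4, ← hc]
    simp [hv, hd2]
    ring
  -- now assemble
  rw [genJacobiOp, hD2]
  have hmid : (∑ ν, ∑ σ, Gt κ κ' c Γ (myPhi κ κ' c (X s₁)) κ' ν σ *
      (2 * deriv (fun t => E t ν) s₁ * deriv (fun t => myPhi κ κ' c (X t) σ) s₁
        + deriv (fun t => E t ν) s₁ * deriv (fun t => E t σ) s₁))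
      = -(∑ ν, ∑ σ, Γ (X s₁) κ' ν σ * deriv (fun t => X t ν) s₁
          * deriv (fun t => X t σ) s₁) := by
    rw [← Finset.sum_neg_distrib]
    apply Finset.sum_congr rfl
    intro ν _
    rw [← Finset.sum_neg_distrib]
    apply Finset.sum_congr rfl
    intro σ _
    rw [hEd1 ν, hEd1 σ, hPd1 σ, Gt_myPhi_center hκ Γ rfl]
    simp only [hv]
    ring
  have hthird : (∑ ν, ∑ σ, ∑ α, pd α (fun x => Gt κ κ' c Γ x κ' ν σ) (myPhi κ κ' c (X s₁)) *
      E s₁ α * (deriv (fun t => myPhi κ κ' c (X t) ν) s₁ + deriv (fun t => E t ν) s₁)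
      * (deriv (fun t => myPhi κ κ' c (X t) σ) s₁ + deriv (fun t => E t σ) s₁)) = 0 := by
    apply Finset.sum_eq_zero; intro ν _
    apply Finset.sum_eq_zero; intro σ _
    apply Finset.sum_eq_zero; intro α _
    rw [hEd1 ν, hPd1 ν]
    ring
  rw [hmid, hthird]
  have hgeo := hXgeo s₁ hs₁ κ'
  simp only [hv, hd2] at *
  linarith [hgeo]

/-- The quadratic ODE right-hand side for the generalized Jacobi equation along a
constant geodesic. -/
def jacRHS {n : ℕ} (B : Fin n → Fin n → Fin n → ℝ) (T : Fin n → Fin n → Fin n → Fin n → ℝ)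
    (u p : Fin n → ℝ) (μ : Fin n) : ℝ :=
  -(∑ ν, ∑ σ, B μ ν σ * p ν * p σ) - ∑ ν, ∑ σ, ∑ α, T α μ ν σ * u α * p ν * p σ

lemma contDiff_jacRHS {n : ℕ} (B : Fin n → Fin n → Fin n → ℝ)
    (T : Fin n → Fin n → Fin n → Fin n → ℝ) :
    ContDiff ℝ ∞ (fun P : (Fin n → ℝ) × (Fin n → ℝ) => (P.2, fun μ => jacRHS B T P.1 P.2 μ)) := by
  apply ContDiff.prodMk contDiff_snd
  apply contDiff_pi.mpr
  intro μ
  unfold jacRHS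
  have hp : ∀ ν : Fin n, ContDiff ℝ ∞ (fun P : (Fin n → ℝ) × (Fin n → ℝ) => P.2 ν) :=
    fun ν => (contDiff_apply ℝ ℝ ν).comp contDiff_snd
  have hu : ∀ ν : Fin n, ContDiff ℝ ∞ (fun P : (Fin n → ℝ) × (Fin n → ℝ) => P.1 ν) :=
    fun ν => (contDiff_apply ℝ ℝ ν).comp contDiff_fst
  apply ContDiff.sub
  · exact (ContDiff.sum fun ν _ => ContDiff.sum fun σ _ =>
      (contDiff_const.mul (hp ν)).mul (hp σ)).neg
  · exact ContDiff.sum fun ν _ => ContDiff.sum fun σ _ => ContDiff.sum fun α _ =>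
      ((contDiff_const.mul (hu α)).mul (hp ν)).mul (hp σ)

/-- Existence of a smooth local solution of the generalized Jacobi ODE with prescribed
initial data. -/
lemma jac_ode_exists {n : ℕ} (B : Fin n → Fin n → Fin n → ℝ)
    (T : Fin n → Fin n → Fin n → Fin n → ℝ) (s₀ : ℝ) (w : Fin n → ℝ) :
    ∃ ε > (0:ℝ), ∃ ξ η : ℝ → Fin n → ℝ,
      ξ s₀ = (fun _ => 0) ∧ η s₀ = w ∧
      ContDiffOn ℝ ∞ ξ (Ioo (s₀ - ε) (s₀ + ε)) ∧
      (∀ s ∈ Ioo (s₀ - ε) (s₀ + ε), ∀ μ,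
        HasDerivAt (fun t => ξ t μ) (η s μ) s) ∧
      (∀ s ∈ Ioo (s₀ - ε) (s₀ + ε), ∀ μ,
        HasDerivAt (fun t => η t μ) (jacRHS B T (ξ s) (η s) μ) s) := by
  classical
  set vf : (Fin n → ℝ) × (Fin n → ℝ) → (Fin n → ℝ) × (Fin n → ℝ) :=
    fun P => (P.2, fun μ => jacRHS B T P.1 P.2 μ) with hvf
  obtain ⟨f, hf0, ε, hε, hf⟩ :=
    ContDiffAt.exists_forall_mem_closedBall_exists_eq_forall_mem_Ioo_hasDerivAt₀ (((contDiff_jacRHS B T).of_le (by exact_mod_cast le_top)).contDiffAt) s₀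
      (x₀ := ((fun _ => 0), w))
  set J := Ioo (s₀ - ε) (s₀ + ε) with hJ
  -- smoothness bootstrap
  have hsmooth : ContDiffOn ℝ ∞ f J := by
    rw [contDiffOn_infty]
    intro k
    induction k with
    | zero =>
      rw [show ((0:ℕ):WithTop ℕ∞) = 0 by rfl, contDiffOn_zero]
      exact fun t ht => ((hf t ht).differentiableAt.continuousAt).continuousWithinAt
    | succ k ih =>
      rw [show (((k+1:ℕ)):WithTop ℕ∞) = (k:WithTop ℕ∞) + 1 by push_cast; ring,
        contDiffOn_succ_iff_deriv_of_isOpen isOpen_Ioo]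
      refine ⟨fun t ht => ((hf t ht).differentiableAt).differentiableWithinAt, by simp, ?_⟩
      exact (((contDiff_jacRHS B T).of_le (by exact_mod_cast le_top)).comp_contDiffOn ih).congr
        fun t ht => (hf t ht).deriv
  refine ⟨ε, hε, fun s => (f s).1, fun s => (f s).2, ?_, ?_, ?_, ?_, ?_⟩
  · simp [hf0]
  · simp [hf0]
  · exact ((ContinuousLinearMap.fst ℝ _ _).contDiff).comp_contDiffOn hsmooth
  · intro s hs μ
    have h := ((ContinuousLinearMap.proj μ).comp
      (ContinuousLinearMap.fst ℝ (Fin n → ℝ) (Fin n → ℝ))).hasFDerivAt.comp_hasDerivAt s (hf s hs)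
    exact h
  · intro s hs μ
    have h := ((ContinuousLinearMap.proj μ).comp
      (ContinuousLinearMap.snd ℝ (Fin n → ℝ) (Fin n → ℝ))).hasFDerivAt.comp_hasDerivAt s (hf s hs)
    exact h

lemma sum_mul_ind {n : ℕ} (G : Fin n → ℝ) (a : Fin n) :
    (∑ β, G β * (if β = a then 1 else 0)) = G a := by
  simp only [mul_ite, mul_one, mul_zero, Finset.sum_ite_eq', Finset.mem_univ, if_true]

lemma jacRHS_init {n : ℕ} (B : Fin n → Fin n → Fin n → ℝ)
    (T : Fin n → Fin n → Fin n → Fin n → ℝ) (κ μ : Fin n) :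
    jacRHS B T (fun _ => 0) (fun ν => if ν = κ then 1 else 0) μ = -(B μ κ κ) := by
  unfold jacRHS
  have h3 : (∑ ν, ∑ σ, ∑ α, T α μ ν σ * (fun _ => (0:ℝ)) α
      * (fun ν => if ν = κ then (1:ℝ) else 0) ν * (fun ν => if ν = κ then (1:ℝ) else 0) σ)
      = 0 := by
    apply Finset.sum_eq_zero; intro ν _
    apply Finset.sum_eq_zero; intro σ _
    apply Finset.sum_eq_zero; intro α _
    simp
  rw [h3]
  have h1 : ∀ ν : Fin n, (∑ σ, B μ ν σ * (fun ν => if ν = κ then (1:ℝ) else 0) ν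
      * (fun ν => if ν = κ then (1:ℝ) else 0) σ)
      = (B μ ν κ * (if ν = κ then 1 else 0)) := by
    intro ν
    have : ∀ σ : Fin n, B μ ν σ * (if ν = κ then (1:ℝ) else 0) * (if σ = κ then (1:ℝ) else 0)
        = (B μ ν σ * (if ν = κ then 1 else 0)) * (if σ = κ then 1 else 0) := fun σ => by ring
    rw [Finset.sum_congr rfl fun σ _ => this σ, sum_mul_ind]
  rw [Finset.sum_congr rfl fun ν _ => h1 ν, sum_mul_ind (fun ν => B μ ν κ) κ]
  simp

lemma caseB_all {n : ℕ} (κ κ' : Fin n) (hκ : κ' ≠ κ)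
    (Γ : (Fin n → ℝ) → Fin n → Fin n → Fin n → ℝ)
    (I : Set ℝ) (hIopen : IsOpen I) (hIcon : I.OrdConnected)
    (X : ℝ → Fin n → ℝ) (s₀ : ℝ) (hs₀ : s₀ ∈ I)
    (hconst : ∀ s ∈ I, X s = X s₀)
    (hder0 : ∀ s ∈ I, ∀ μ : Fin n, deriv (fun t => X t μ) s = 0) :
    ∃ J : Set ℝ, J ⊆ I ∧ IsOpen J ∧ J.OrdConnected ∧ s₀ ∈ J ∧
    ∃ ξ : ℝ → Fin n → ℝ, ContDiffOn ℝ ∞ ξ J ∧ IsGenJacobiField Γ J X ξ ∧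
      genJacobiOp (Gt κ κ' (X s₀ κ - 1) Γ) (fun s => myPhi κ κ' (X s₀ κ - 1) (X s))
        (fun s μ => ∑ ν, pd ν (fun y => myPhi κ κ' (X s₀ κ - 1) y μ) (X s) * ξ s ν) κ' s₀
        = -1 := by
  classical
  set c : ℝ := X s₀ κ - 1 with hcdef
  set w : Fin n → ℝ := fun ν => if ν = κ then 1 else 0 with hwdef
  set B : Fin n → Fin n → Fin n → ℝ := Γ (X s₀) with hBdef
  set T : Fin n → Fin n → Fin n → Fin n → ℝ :=
    fun α μ ν σ => pd α (fun x => Γ x μ ν σ) (X s₀) with hTdef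
  obtain ⟨ε, hε, ξ, η, hξ0, hη0, hξsm, hξd, hηd⟩ := jac_ode_exists B T s₀ w
  set J : Set ℝ := Ioo (s₀ - ε) (s₀ + ε) ∩ I with hJdef
  have hJI : J ⊆ I := inter_subset_right
  have hJopen : IsOpen J := isOpen_Ioo.inter hIopen
  have hs₀J : s₀ ∈ J := ⟨⟨by linarith, by linarith⟩, hs₀⟩
  have hJIoo : J ⊆ Ioo (s₀ - ε) (s₀ + ε) := inter_subset_left
  -- basic deriv facts
  have dξ : ∀ s ∈ J, ∀ ν : Fin n, deriv (fun t => ξ t ν) s = η s ν :=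
    fun s hs ν => (hξd s (hJIoo hs) ν).deriv
  have ddξ : ∀ s ∈ J, ∀ μ : Fin n,
      deriv (deriv (fun t => ξ t μ)) s = jacRHS B T (ξ s) (η s) μ := by
    intro s hs μ
    have heq : deriv (fun t => ξ t μ) =ᶠ[nhds s] fun t => η t μ := by
      filter_upwards [isOpen_Ioo.mem_nhds (hJIoo hs)] with t ht
      exact (hξd t ht μ).deriv
    rw [heq.deriv_eq]
    exact (hηd s (hJIoo hs) μ).deriv
  refine ⟨J, hJI, hJopen, Set.ordConnected_Ioo.inter hIcon, hs₀J,
    ξ, hξsm.mono hJIoo, ?_, ?_⟩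
  · -- generalized Jacobi field property
    intro s hs μ
    rw [genJacobiOp, ddξ s hs μ]
    have h1 : (∑ ν, ∑ σ, Γ (X s) μ ν σ *
        (2 * deriv (fun t => ξ t ν) s * deriv (fun t => X t σ) s
          + deriv (fun t => ξ t ν) s * deriv (fun t => ξ t σ) s))
        = ∑ ν, ∑ σ, B μ ν σ * η s ν * η s σ := by
      apply Finset.sum_congr rfl; intro ν _
      apply Finset.sum_congr rfl; intro σ _
      rw [dξ s hs ν, dξ s hs σ, hder0 s (hJI hs) σ, hconst s (hJI hs), ← hBdef]
      ring
    have h2 : (∑ ν, ∑ σ, ∑ α, pd α (fun x => Γ x μ ν σ) (X s) * ξ s α *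
        (deriv (fun t => X t ν) s + deriv (fun t => ξ t ν) s) *
        (deriv (fun t => X t σ) s + deriv (fun t => ξ t σ) s))
        = ∑ ν, ∑ σ, ∑ α, T α μ ν σ * ξ s α * η s ν * η s σ := by
      apply Finset.sum_congr rfl; intro ν _
      apply Finset.sum_congr rfl; intro σ _
      apply Finset.sum_congr rfl; intro α _
      rw [dξ s hs ν, dξ s hs σ, hder0 s (hJI hs) ν, hder0 s (hJI hs) σ, hconst s (hJI hs),
        hTdef]
      ring
    rw [h1, h2, jacRHS]
    ring
  · -- the contradiction value
    set gl : ℝ → Fin n → ℝ :=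
      fun s μ => ∑ ν, pd ν (fun y => myPhi κ κ' c y μ) (X s) * ξ s ν with hgldef
    have hc1 : X s₀ κ - c = 1 := by rw [hcdef]; ring
    -- closed form of gl on I
    have hgl : ∀ s ∈ I, ∀ μ : Fin n, gl s μ
        = ξ s μ + ((if μ = κ' then 1 else 0) * (1/2)) * ξ s κ := by
      intro s hs μ
      rw [hgldef]
      simp only
      rw [hconst s hs]
      have h1 : ∀ ν : Fin n, pd ν (fun y => myPhi κ κ' c y μ) (X s₀) * ξ s ν
          = ξ s ν * ((if ν = μ then 1 else 0)
              + (if ν = κ then 1 else 0) * ((if μ = κ' then 1 else 0) * (1/2))) := by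
        intro ν
        rw [pd_myPhi, hc1, show (1:ℝ)^2/2 = 1/2 by norm_num]
        ring
      rw [Finset.sum_congr rfl fun ν _ => h1 ν, sum_collapse_pair']
    -- derivative of gl components
    have hFd : ∀ s ∈ J, ∀ μ : Fin n,
        HasDerivAt (fun t => ξ t μ + ((if μ = κ' then 1 else 0) * (1/2)) * ξ t κ)
          (η s μ + ((if μ = κ' then 1 else 0) * (1/2)) * η s κ) s :=
      fun s hs μ => (hξd s (hJIoo hs) μ).add ((hξd s (hJIoo hs) κ).const_mul _)
    have hglF : ∀ μ : Fin n, (fun t => gl t μ)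
        =ᶠ[nhds s₀] fun t => ξ t μ + ((if μ = κ' then 1 else 0) * (1/2)) * ξ t κ := by
      intro μ
      filter_upwards [hIopen.mem_nhds hs₀] with t ht
      exact hgl t ht μ
    have hgld : ∀ μ : Fin n, deriv (fun t => gl t μ) s₀
        = (if μ = κ then 1 else 0) + (if μ = κ' then 1 else 0) * (1/2) := by
      intro μ
      rw [(hglF μ).deriv_eq, (hFd s₀ hs₀J μ).deriv, hη0, hwdef]
      simp
    have hgldd : deriv (deriv (fun t => gl t κ')) s₀
        = -(Γ (X s₀) κ' κ κ) + (1/2) * -(Γ (X s₀) κ κ κ) := by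
      have heq2 : deriv (fun t => gl t κ') =ᶠ[nhds s₀]
          fun s => η s κ' + ((if κ' = κ' then (1:ℝ) else 0) * (1/2)) * η s κ := by
        refine ((hglF κ').deriv).trans ?_
        filter_upwards [hJopen.mem_nhds hs₀J] with t ht
        exact (hFd t ht κ').deriv
      rw [heq2.deriv_eq]
      have h3 : deriv (fun s => η s κ' + ((if κ' = κ' then (1:ℝ) else 0) * (1/2)) * η s κ) s₀ = _ := ((hηd s₀ (hJIoo hs₀J) κ').add
        ((hηd s₀ (hJIoo hs₀J) κ).const_mul ((if κ' = κ' then (1:ℝ) else 0) * (1/2)))).deriv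
      rw [h3, hξ0, hη0, hwdef, jacRHS_init B T κ κ', jacRHS_init B T κ κ, hBdef]
      simp
    -- the transformed curve is constant
    have dXt : ∀ ν : Fin n, deriv (fun t => myPhi κ κ' c (X t) ν) s₀ = 0 := by
      intro ν
      have heqc : (fun t => myPhi κ κ' c (X t) ν)
          =ᶠ[nhds s₀] fun _ => myPhi κ κ' c (X s₀) ν := by
        filter_upwards [hIopen.mem_nhds hs₀] with t ht
        rw [hconst t ht]
      rw [heqc.deriv_eq, deriv_const]
    have hyk : myPhi κ κ' c (X s₀) κ - c = 1 := by rw [myPhi_apply_kappa hκ]; exact hc1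
    -- the middle term
    have hmid : (∑ ν, ∑ σ, Gt κ κ' c Γ (myPhi κ κ' c (X s₀)) κ' ν σ *
        (2 * deriv (fun t => gl t ν) s₀ * deriv (fun t => myPhi κ κ' c (X t) σ) s₀
          + deriv (fun t => gl t ν) s₀ * deriv (fun t => gl t σ) s₀))
        = Γ (X s₀) κ' κ κ + (1/2) * Γ (X s₀) κ κ κ - 1 := by
      have hin : ∀ ν : Fin n, (∑ σ, Gt κ κ' c Γ (myPhi κ κ' c (X s₀)) κ' ν σ *
          (2 * deriv (fun t => gl t ν) s₀ * deriv (fun t => myPhi κ κ' c (X t) σ) s₀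
            + deriv (fun t => gl t ν) s₀ * deriv (fun t => gl t σ) s₀))
          = (Gt κ κ' c Γ (myPhi κ κ' c (X s₀)) κ' ν κ * deriv (fun t => gl t ν) s₀
              + (1/2) * (Gt κ κ' c Γ (myPhi κ κ' c (X s₀)) κ' ν κ'
                  * deriv (fun t => gl t ν) s₀)) := by
        intro ν
        have h1 : ∀ σ : Fin n, Gt κ κ' c Γ (myPhi κ κ' c (X s₀)) κ' ν σ *
            (2 * deriv (fun t => gl t ν) s₀ * deriv (fun t => myPhi κ κ' c (X t) σ) s₀
              + deriv (fun t => gl t ν) s₀ * deriv (fun t => gl t σ) s₀)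
            = (Gt κ κ' c Γ (myPhi κ κ' c (X s₀)) κ' ν σ * deriv (fun t => gl t ν) s₀)
                * ((if σ = κ then 1 else 0) + (if σ = κ' then 1 else 0) * (1/2)) := by
          intro σ
          rw [dXt σ, hgld σ]
          ring
        rw [Finset.sum_congr rfl fun σ _ => h1 σ, sum_collapse_pair']
      rw [Finset.sum_congr rfl fun ν _ => hin ν]
      have h2 : ∀ ν : Fin n, (Gt κ κ' c Γ (myPhi κ κ' c (X s₀)) κ' ν κ
            * deriv (fun t => gl t ν) s₀
          + (1/2) * (Gt κ κ' c Γ (myPhi κ κ' c (X s₀)) κ' ν κ'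
              * deriv (fun t => gl t ν) s₀))
          = (Gt κ κ' c Γ (myPhi κ κ' c (X s₀)) κ' ν κ
              + (1/2) * Gt κ κ' c Γ (myPhi κ κ' c (X s₀)) κ' ν κ')
              * ((if ν = κ then 1 else 0) + (if ν = κ' then 1 else 0) * (1/2)) := by
        intro ν
        rw [hgld ν]
        ring
      rw [Finset.sum_congr rfl fun ν _ => h2 ν, sum_collapse_pair']
      simp only [Gt_def, GtH_myPhi hκ, hyk, hc1]
      simp [hκ, Ne.symm hκ]
      ring
    -- assemble
    simp only [genJacobiOp]
    have hthird : (∑ ν, ∑ σ, ∑ α, pd α (fun x => Gt κ κ' c Γ x κ' ν σ)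
        (myPhi κ κ' c (X s₀)) * gl s₀ α *
        (deriv (fun t => myPhi κ κ' c (X t) ν) s₀ + deriv (fun t => gl t ν) s₀) *
        (deriv (fun t => myPhi κ κ' c (X t) σ) s₀ + deriv (fun t => gl t σ) s₀)) = 0 := by
      apply Finset.sum_eq_zero; intro ν _
      apply Finset.sum_eq_zero; intro σ _
      apply Finset.sum_eq_zero; intro α _
      rw [hgl s₀ hs₀ α, hξ0]
      simp
    rw [hgldd, hmid, hthird]
    ring


/-- In dimension `n ≥ 3`, along any geodesic one can find (after shrinking
the interval around `s₀`) a generalized Jacobi field `ξ` and a smooth diffeomorphism `φ`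
of a neighborhood of the geodesic such that the tensorially transformed map
`ξ̃ s = Dφ(X s) (ξ s)` is NOT a generalized Jacobi field for the transformed connection
coefficients along `φ ∘ X`. -/
theorem genJacobi_not_tensorial
    {n : ℕ} (hn : 3 ≤ n) (U : Set (Fin n → ℝ)) (hU : IsOpen U)
    (Γ : (Fin n → ℝ) → Fin n → Fin n → Fin n → ℝ) (hΓ : IsConnCoeff U Γ)
    (I : Set ℝ) (hIopen : IsOpen I) (hIint : I.OrdConnected)
    (X : ℝ → Fin n → ℝ) (hXU : ∀ s ∈ I, X s ∈ U) (hXsm : ContDiffOn ℝ ∞ X I)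
    (hXgeo : IsGeodesic Γ I X)
    (s₀ : ℝ) (hs₀ : s₀ ∈ I) :
    ∃ I' : Set ℝ, I' ⊆ I ∧ IsOpen I' ∧ I'.OrdConnected ∧ s₀ ∈ I' ∧
    ∃ ξ : ℝ → Fin n → ℝ, ContDiffOn ℝ ∞ ξ I' ∧ IsGenJacobiField Γ I' X ξ ∧
    ∃ V : Set (Fin n → ℝ), V ⊆ U ∧ IsOpen V ∧ (∀ s ∈ I', X s ∈ V) ∧
    ∃ φ : (Fin n → ℝ) → Fin n → ℝ, IsDiffeoOn φ V ∧
    ∃ Γt : (Fin n → ℝ) → Fin n → Fin n → Fin n → ℝ, TransformedConn V φ Γ Γt ∧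
      ¬ IsGenJacobiField Γt I' (fun s => φ (X s))
          (fun s μ => ∑ ν, pd ν (fun y => φ y μ) (X s) * ξ s ν) := by
  classical
  have h0 : (0:ℕ) < n := by omega
  have h1 : (1:ℕ) < n := by omega
  by_cases hcase : ∀ s ∈ I, ∀ μ : Fin n, deriv (fun t => X t μ) s = 0
  · -- the geodesic is constant
    have hκ : (⟨1, h1⟩ : Fin n) ≠ ⟨0, h0⟩ := by
      simp [Fin.ext_iff]
    have hconst : ∀ s ∈ I, X s = X s₀ := by
      intro s hs
      have hconv : Convex ℝ I := convex_iff_ordConnected.mpr hIint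
      funext μ
      refine hconv.is_const_of_fderivWithin_eq_zero
        (((contDiffOn_pi.mp hXsm) μ).differentiableOn (by norm_num)) ?_ hs hs₀
      intro z hz
      rw [fderivWithin_of_isOpen hIopen hz]
      apply ContinuousLinearMap.ext_ring
      rw [ContinuousLinearMap.zero_apply, fderiv_apply_one_eq_deriv]
      exact hcase z hz μ
    obtain ⟨J, hJI, hJo, hJc, hJs, ξ, hξsm, hξjac, hval⟩ :=
      caseB_all ⟨0, h0⟩ ⟨1, h1⟩ hκ Γ I hIopen hIint X s₀ hs₀ hconst
        (fun s hs μ => hcase s hs μ)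
    refine ⟨J, hJI, hJo, hJc, hJs, ξ, hξsm, hξjac, U, Subset.rfl, hU,
      fun s hs => hXU s (hJI hs), myPhi ⟨0, h0⟩ ⟨1, h1⟩ (X s₀ ⟨0, h0⟩ - 1),
      isDiffeoOn_myPhi hκ _ U hU, Gt ⟨0, h0⟩ ⟨1, h1⟩ (X s₀ ⟨0, h0⟩ - 1) Γ,
      fun x _ lam ν σ => transformedConn_myPhi hκ _ Γ x lam ν σ, ?_⟩
    intro hJF
    have h2 := hJF s₀ hJs ⟨1, h1⟩
    rw [hval] at h2
    norm_num at h2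
  · push_neg at hcase
    obtain ⟨s₁, hs₁, κ, hvκ⟩ := hcase
    have hκ : (if κ = ⟨0, h0⟩ then (⟨1, h1⟩ : Fin n) else ⟨0, h0⟩) ≠ κ := by
      by_cases h : κ = ⟨0, h0⟩
      · rw [if_pos h, h]
        simp [Fin.ext_iff]
      · rw [if_neg h]
        exact fun e => h e.symm
    set κ' : Fin n := if κ = ⟨0, h0⟩ then ⟨1, h1⟩ else ⟨0, h0⟩ with hκ'def
    have hjac : IsGenJacobiField Γ I X
        (fun s μ => (X s₁ μ + (if μ = κ then 1 else 0)) - X s μ) := by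
      intro s hs μ
      rw [genJacobiOp]
      have hd1 : ∀ ν : Fin n,
          deriv (fun t => (X s₁ ν + (if ν = κ then 1 else 0)) - X t ν) s
          = -deriv (fun t => X t ν) s := fun ν => deriv_const_sub _
      have hdd : deriv (deriv (fun t =>
          (X s₁ μ + (if μ = κ then 1 else 0)) - X t μ)) s
          = -deriv (deriv (fun t => X t μ)) s := by
        have hfun : deriv (fun t => (X s₁ μ + (if μ = κ then 1 else 0)) - X t μ)
            = fun u => -deriv (fun t => X t μ) u :=
          funext fun u => deriv_const_sub _
        rw [hfun, deriv.fun_neg]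
      have hmid : (∑ ν, ∑ σ, Γ (X s) μ ν σ *
          (2 * deriv (fun t => (X s₁ ν + (if ν = κ then 1 else 0)) - X t ν) s
              * deriv (fun t => X t σ) s
            + deriv (fun t => (X s₁ ν + (if ν = κ then 1 else 0)) - X t ν) s
              * deriv (fun t => (X s₁ σ + (if σ = κ then 1 else 0)) - X t σ) s))
          = -(∑ ν, ∑ σ, Γ (X s) μ ν σ * deriv (fun t => X t ν) s
              * deriv (fun t => X t σ) s) := by
        rw [← Finset.sum_neg_distrib]
        apply Finset.sum_congr rfl; intro ν _
        rw [← Finset.sum_neg_distrib]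
        apply Finset.sum_congr rfl; intro σ _
        rw [hd1 ν, hd1 σ]
        ring
      have hthird : (∑ ν, ∑ σ, ∑ α, pd α (fun x => Γ x μ ν σ) (X s) *
          ((X s₁ α + (if α = κ then 1 else 0)) - X s α) *
          (deriv (fun t => X t ν) s
            + deriv (fun t => (X s₁ ν + (if ν = κ then 1 else 0)) - X t ν) s) *
          (deriv (fun t => X t σ) s
            + deriv (fun t => (X s₁ σ + (if σ = κ then 1 else 0)) - X t σ) s)) = 0 := by
        apply Finset.sum_eq_zero; intro ν _
        apply Finset.sum_eq_zero; intro σ _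
        apply Finset.sum_eq_zero; intro α _
        rw [hd1 ν]
        ring
      rw [hdd, hmid, hthird]
      have := hXgeo s hs μ
      linarith
    refine ⟨I, Subset.rfl, hIopen, hIint, hs₀,
      (fun s μ => (X s₁ μ + (if μ = κ then 1 else 0)) - X s μ),
      contDiffOn_pi.mpr fun μ => contDiffOn_const.sub ((contDiffOn_pi.mp hXsm) μ),
      hjac, U, Subset.rfl, hU, hXU, myPhi κ κ' (X s₁ κ),
      isDiffeoOn_myPhi hκ _ U hU, Gt κ κ' (X s₁ κ) Γ,
      fun x _ lam ν σ => transformedConn_myPhi hκ _ Γ x lam ν σ, ?_⟩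
    intro hJF
    have h2 := hJF s₁ hs₁ κ'
    have h3 := caseA_key κ κ' hκ Γ I hIopen X hXsm hXgeo s₁ hs₁
    have h4 : deriv (fun t => X t κ) s₁ ^ 2 = 0 := by
      rw [← h3]
      exact h2
    exact hvκ ((pow_eq_zero_iff two_ne_zero).mp h4)
end
end

section
/- Let Γ be smooth torsion-free connection coefficients on an open set U ⊆ ℝⁿ (n ≥ 2), let X : I → U be a geodesic, let s₀ ∈ I and p = X(s₀), and let ξ : I → ℝⁿ be a generalized Jacobi field along X. Let φ : U → Ũ be a smooth diffeomorphism onto an open set Ũ ⊆ ℝⁿ all of whose second partial derivatives vanish at p, i.e., (∂²φ^μ/∂x^ν∂x^σ)(p) = 0 for all μ,ν,σ, and let Γ̃ be the transformed connection coefficients on Ũ. Set ξ̃(s) = Dφ(X(s)) ξ(s) and let G̃ denote the generalized Jacobi operator formed from Γ̃ along φ∘X. Then for every μ, G̃^μ[ξ̃](s₀) = − (∂³φ^μ/∂x^τ∂x^ρ∂x^σ)(p) · ξ^τ(s₀) (2 Ẋ^ρ(s₀) + ξ̇^ρ(s₀)) ξ̇^σ(s₀) (summation over τ,ρ,σ).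 -/
open Set ContDiff

noncomputable section

namespace Tools
variable {n : ℕ}

lemma pi_sum_single (v : Fin n → ℝ) : ∑ i, v i • (Pi.single i 1 : Fin n → ℝ) = v := by
  funext j
  simp [Finset.sum_apply, Pi.single_apply]

lemma fderiv_apply_pd {f : (Fin n → ℝ) → ℝ} {x : Fin n → ℝ}
    (v : Fin n → ℝ) :
    fderiv ℝ f x v = ∑ i, pd i f x * v i := by
  conv_lhs => rw [← pi_sum_single v]
  rw [map_sum]
  refine Finset.sum_congr rfl fun i _ => ?_
  rw [map_smul, pd, smul_eq_mul, mul_comm]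

lemma hasDerivAt_comp_curve {f : (Fin n → ℝ) → ℝ} {X : ℝ → Fin n → ℝ} {s : ℝ}
    (hf : DifferentiableAt ℝ f (X s)) (hX : DifferentiableAt ℝ X s) :
    HasDerivAt (fun t => f (X t))
      (∑ ν, pd ν f (X s) * deriv (fun t => X t ν) s) s := by
  have h1 : HasDerivAt (fun t => f (X t)) (fderiv ℝ f (X s) (deriv X s)) s :=
    hf.hasFDerivAt.comp_hasDerivAt s hX.hasDerivAt
  have h2 : ∀ ν, deriv X s ν = deriv (fun t => X t ν) s := by
    intro ν
    exact (((ContinuousLinearMap.proj (R := ℝ) (φ := fun _ : Fin n => ℝ) ν).hasFDerivAt).comp_hasDerivAt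
      s hX.hasDerivAt).deriv.symm
  have := fderiv_apply_pd (f := f) (x := X s) (deriv X s)
  simp only [h2] at this
  rw [← this]; exact h1

lemma pd_comp_map {f : (Fin n → ℝ) → ℝ} {φ : (Fin n → ℝ) → Fin n → ℝ} {x : Fin n → ℝ}
    (hf : DifferentiableAt ℝ f (φ x)) (hφ : DifferentiableAt ℝ φ x) (τ : Fin n) :
    pd τ (fun y => f (φ y)) x = ∑ γ, pd γ f (φ x) * pd τ (fun y => φ y γ) x := by
  have h1 : fderiv ℝ (fun y => f (φ y)) x = (fderiv ℝ f (φ x)).comp (fderiv ℝ φ x) :=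
    fderiv_comp x hf hφ
  have h2 : ∀ γ, fderiv ℝ φ x (Pi.single τ 1) γ = pd τ (fun y => φ y γ) x := by
    intro γ
    have : fderiv ℝ (fun y => φ y γ) x
        = (ContinuousLinearMap.proj (R := ℝ) (φ := fun _ : Fin n => ℝ) γ).comp (fderiv ℝ φ x) := by
      exact (((ContinuousLinearMap.proj (R := ℝ) (φ := fun _ : Fin n => ℝ) γ).hasFDerivAt).comp x
        hφ.hasFDerivAt).fderiv
    rw [pd, this]; rfl
  rw [pd, h1, ContinuousLinearMap.comp_apply, fderiv_apply_pd]
  exact Finset.sum_congr rfl fun γ _ => by rw [h2]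

lemma pd_congr_nhds {f g : (Fin n → ℝ) → ℝ} {x : Fin n → ℝ}
    (h : f =ᶠ[nhds x] g) (τ : Fin n) : pd τ f x = pd τ g x := by
  rw [pd, pd, h.fderiv_eq]

lemma contDiffOn_pd {f : (Fin n → ℝ) → ℝ} {U : Set (Fin n → ℝ)}
    (hf : ContDiffOn ℝ ∞ f U) (hU : IsOpen U) (j : Fin n) :
    ContDiffOn ℝ ∞ (pd j f) U := by
  have h1 : ContDiffOn ℝ ∞ (fderiv ℝ f) U := hf.fderiv_of_isOpen hU (by simp)
  exact h1.clm_apply contDiffOn_const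

lemma pd_pd_comm {f : (Fin n → ℝ) → ℝ} {U : Set (Fin n → ℝ)} {x : Fin n → ℝ}
    (hU : IsOpen U) (hx : x ∈ U) (hf : ContDiffOn ℝ ∞ f U) (i j : Fin n) :
    pd i (pd j f) x = pd j (pd i f) x := by
  have hf' : ∀ᶠ y in nhds x, HasFDerivAt f (fderiv ℝ f y) y := by
    filter_upwards [hU.mem_nhds hx] with y hy
    exact ((hf.contDiffAt (hU.mem_nhds hy)).differentiableAt (by simp)).hasFDerivAt
  have hd2 : DifferentiableAt ℝ (fderiv ℝ f) x := by
    have := (hf.fderiv_of_isOpen (m := ∞) hU (by simp)).contDiffAt (hU.mem_nhds hx)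
    exact this.differentiableAt (by simp)
  have hsymm := second_derivative_symmetric_of_eventually hf' hd2.hasFDerivAt
  have key : ∀ a b : Fin n, pd a (pd b f) x
      = fderiv ℝ (fderiv ℝ f) x (Pi.single a 1) (Pi.single b 1) := by
    intro a b
    have : fderiv ℝ (fun y => fderiv ℝ f y (Pi.single b 1)) x
        = ((fderiv ℝ (fderiv ℝ f) x).flip (Pi.single b 1)) := by
      have := fderiv_clm_apply (c := fderiv ℝ f) (u := fun _ => Pi.single b (1:ℝ)) hd2
        (differentiableAt_const _)
      rw [this]; ext v; simp
    rw [pd]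
    show fderiv ℝ (fun y => fderiv ℝ f y (Pi.single b 1)) x (Pi.single a 1) = _
    rw [this]; rfl
  rw [key i j, key j i, hsymm]

end Tools

namespace Tools2
open Tools
variable {n : ℕ}

lemma pd_mul {f g : (Fin n → ℝ) → ℝ} {x : Fin n → ℝ} (hf : DifferentiableAt ℝ f x)
    (hg : DifferentiableAt ℝ g x) (i : Fin n) :
    pd i (fun y => f y * g y) x = pd i f x * g x + f x * pd i g x := by
  rw [pd, fderiv_fun_mul hf hg]
  simp only [ContinuousLinearMap.add_apply, ContinuousLinearMap.smul_apply, smul_eq_mul, pd]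
  ring

lemma pd_sum {ι : Type*} (s : Finset ι) {F : ι → (Fin n → ℝ) → ℝ} {x : Fin n → ℝ}
    (hF : ∀ j ∈ s, DifferentiableAt ℝ (F j) x) (i : Fin n) :
    pd i (fun y => ∑ j ∈ s, F j y) x = ∑ j ∈ s, pd i (F j) x := by
  rw [pd, fderiv_fun_sum hF]
  simp [pd]

lemma pd_sub {f g : (Fin n → ℝ) → ℝ} {x : Fin n → ℝ} (hf : DifferentiableAt ℝ f x)
    (hg : DifferentiableAt ℝ g x) (i : Fin n) :
    pd i (fun y => f y - g y) x = pd i f x - pd i g x := by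
  rw [pd, fderiv_fun_sub hf hg]; simp [pd]

lemma pd_proj (i α : Fin n) (x : Fin n → ℝ) :
    pd i (fun y : Fin n → ℝ => y α) x = if α = i then 1 else 0 := by
  have h : (fun y : Fin n → ℝ => y α)
      = (ContinuousLinearMap.proj (R := ℝ) (φ := fun _ : Fin n => ℝ) α) := rfl
  rw [pd, h, ContinuousLinearMap.fderiv]
  simp [Pi.single_apply]

end Tools2


lemma sum_swap3 {n : ℕ} (f : Fin n → Fin n → Fin n → ℝ) :
    ∑ a, ∑ b, ∑ c, f a b c = ∑ c, ∑ a, ∑ b, f a b c := by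
  have h1 : ∀ a : Fin n, ∑ b, ∑ c, f a b c = ∑ c, ∑ b, f a b c := fun a => Finset.sum_comm
  simp_rw [h1]
  exact Finset.sum_comm

lemma sum_swap4 {n : ℕ} (f : Fin n → Fin n → Fin n → Fin n → ℝ) :
    ∑ ν, ∑ σ, ∑ a, ∑ b, f ν σ a b = ∑ a, ∑ b, ∑ ν, ∑ σ, f ν σ a b := by
  have h1 : ∀ ν : Fin n, ∑ σ, ∑ a, ∑ b, f ν σ a b = ∑ a, ∑ σ, ∑ b, f ν σ a b :=
    fun ν => Finset.sum_comm
  simp_rw [h1]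
  rw [Finset.sum_comm]
  refine Finset.sum_congr rfl fun a _ => ?_
  have h2 : ∀ ν : Fin n, ∑ σ, ∑ b, f ν σ a b = ∑ b, ∑ σ, f ν σ a b :=
    fun ν => Finset.sum_comm
  simp_rw [h2]
  exact Finset.sum_comm

lemma mul_sum_sum {n : ℕ} (c : ℝ) (f g : Fin n → ℝ) :
    (c * ∑ a, f a) * (∑ b, g b) = ∑ a, ∑ b, c * f a * g b := by
  simp only [Finset.mul_sum, Finset.sum_mul]
  exact Finset.sum_comm

lemma tri_sum {n : ℕ} (x f g : Fin n → ℝ) :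
    (∑ τ, x τ) * (∑ a, f a) * (∑ b, g b) = ∑ τ, ∑ a, ∑ b, x τ * f a * g b := by
  rw [Finset.sum_mul, Finset.sum_mul]
  exact Finset.sum_congr rfl fun τ _ => mul_sum_sum _ _ _

lemma sum_perm4 {n : ℕ} (f : Fin n → Fin n → Fin n → Fin n → ℝ) :
    ∑ τ, ∑ a, ∑ b, ∑ c, f τ a b c = ∑ c, ∑ a, ∑ b, ∑ τ, f τ a b c := by
  have h1 : ∀ τ : Fin n, ∑ a, ∑ b, ∑ c, f τ a b c = ∑ c, ∑ a, ∑ b, f τ a b c :=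
    fun τ => sum_swap3 _
  simp_rw [h1]
  rw [Finset.sum_comm]
  exact Finset.sum_congr rfl fun c _ => (sum_swap3 _).symm

/-- Explicit local formula for the transformed connection, used to differentiate it. -/
def Gfun {n : ℕ} (φ ψ : (Fin n → ℝ) → Fin n → ℝ)
    (Γ : (Fin n → ℝ) → Fin n → Fin n → Fin n → ℝ) (μ a b : Fin n) (x : Fin n → ℝ) : ℝ :=
  ∑ ν, ∑ σ, ((∑ α, pd α (fun y => φ y μ) x * Γ x α ν σ) - pd ν (pd σ (fun z => φ z μ)) x)
    * pd a (fun y => ψ y ν) (φ x) * pd b (fun y => ψ y σ) (φ x)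

open Tools Tools2 Filter in
/-- If all second partial derivatives of the diffeomorphism `φ` vanish at
`p = X s₀`, then the generalized Jacobi operator of the transformed connection applied to the
tensorially transformed field `ξ̃ s = Dφ(X s) (ξ s)` of a generalized Jacobi field `ξ` equals,
at `s₀`, `−(∂³φ^μ/∂x^τ∂x^ρ∂x^σ)(p) ξ^τ (2Ẋ^ρ + ξ̇^ρ) ξ̇^σ`. -/
theorem genJacobiOp_transform_third_derivative
    {n : ℕ} (hn : 2 ≤ n) (U : Set (Fin n → ℝ)) (hU : IsOpen U)
    (Γ : (Fin n → ℝ) → Fin n → Fin n → Fin n → ℝ) (hΓ : IsConnCoeff U Γ)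
    (I : Set ℝ) (hIopen : IsOpen I) (hIint : I.OrdConnected)
    (X : ℝ → Fin n → ℝ) (hXU : ∀ s ∈ I, X s ∈ U) (hXsm : ContDiffOn ℝ ∞ X I)
    (hXgeo : IsGeodesic Γ I X)
    (s₀ : ℝ) (hs₀ : s₀ ∈ I)
    (ξ : ℝ → Fin n → ℝ) (hξsm : ContDiffOn ℝ ∞ ξ I) (hξ : IsGenJacobiField Γ I X ξ)
    (φ : (Fin n → ℝ) → Fin n → ℝ) (hφ : IsDiffeoOn φ U)
    (hφ2 : ∀ μ ν σ : Fin n, pd ν (fun y => pd σ (fun z => φ z μ) y) (X s₀) = 0)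
    (Γt : (Fin n → ℝ) → Fin n → Fin n → Fin n → ℝ)
    (hΓt : TransformedConn U φ Γ Γt) :
    ∀ μ : Fin n,
      genJacobiOp Γt (fun s => φ (X s))
          (fun s ν => ∑ ρ, pd ρ (fun y => φ y ν) (X s) * ξ s ρ) μ s₀
        = - ∑ τ, ∑ ρ, ∑ σ,
            pd τ (fun x => pd ρ (fun y => pd σ (fun z => φ z μ) y) x) (X s₀)
              * ξ s₀ τ
              * (2 * deriv (fun t => X t ρ) s₀ + deriv (fun t => ξ t ρ) s₀)
              * deriv (fun t => ξ t σ) s₀ := by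
  intro μ
  obtain ⟨hΓsm, hΓsym⟩ := hΓ
  obtain ⟨hφsm, hVopen, ψ, hψsm, hψφ, hψmem⟩ := hφ
  have h1le : (∞ : WithTop ℕ∞) ≠ 0 := by simp
  have hpU : X s₀ ∈ U := hXU s₀ hs₀
  have hqV : φ (X s₀) ∈ φ '' U := ⟨X s₀, hpU, rfl⟩
  have hdU : ∀ {f : (Fin n → ℝ) → ℝ}, ContDiffOn ℝ ∞ f U → ∀ {x}, x ∈ U →
      DifferentiableAt ℝ f x :=
    fun hf _ hx => (hf.contDiffAt (hU.mem_nhds hx)).differentiableAt h1le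
  have hdV : ∀ {f : (Fin n → ℝ) → ℝ}, ContDiffOn ℝ ∞ f (φ '' U) → ∀ {y}, y ∈ φ '' U →
      DifferentiableAt ℝ f y :=
    fun hf _ hy => (hf.contDiffAt (hVopen.mem_nhds hy)).differentiableAt h1le
  have hφν : ∀ ν, ContDiffOn ℝ ∞ (fun y => φ y ν) U := fun ν =>
    (ContinuousLinearMap.proj (R := ℝ) (φ := fun _ : Fin n => ℝ) ν).contDiff.comp_contDiffOn hφsm
  have hψν : ∀ ν, ContDiffOn ℝ ∞ (fun y => ψ y ν) (φ '' U) := fun ν =>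
    (ContinuousLinearMap.proj (R := ℝ) (φ := fun _ : Fin n => ℝ) ν).contDiff.comp_contDiffOn hψsm
  have hd1 : ∀ a ν, ContDiffOn ℝ ∞ (pd a (fun y => φ y ν)) U :=
    fun a ν => contDiffOn_pd (hφν ν) hU a
  have hd2 : ∀ b a ν, ContDiffOn ℝ ∞ (pd b (pd a (fun y => φ y ν))) U :=
    fun b a ν => contDiffOn_pd (hd1 a ν) hU b
  have hψd1 : ∀ a ν, ContDiffOn ℝ ∞ (pd a (fun y => ψ y ν)) (φ '' U) :=
    fun a ν => contDiffOn_pd (hψν ν) hVopen a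
  have hd2p : ∀ b a ν, pd b (pd a (fun y => φ y ν)) (X s₀) = 0 := fun b a ν => hφ2 ν b a
  have hXν : ∀ a, ContDiffOn ℝ ∞ (fun t => X t a) I := fun a =>
    (ContinuousLinearMap.proj (R := ℝ) (φ := fun _ : Fin n => ℝ) a).contDiff.comp_contDiffOn hXsm
  have hξν : ∀ a, ContDiffOn ℝ ∞ (fun t => ξ t a) I := fun a =>
    (ContinuousLinearMap.proj (R := ℝ) (φ := fun _ : Fin n => ℝ) a).contDiff.comp_contDiffOn hξsm
  have hXν' : ∀ a, ContDiffOn ℝ ∞ (deriv (fun t => X t a)) I :=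
    fun a => (hXν a).deriv_of_isOpen hIopen (by simp)
  have hξν' : ∀ a, ContDiffOn ℝ ∞ (deriv (fun t => ξ t a)) I :=
    fun a => (hξν a).deriv_of_isOpen hIopen (by simp)
  have hdI : ∀ {g : ℝ → ℝ}, ContDiffOn ℝ ∞ g I → ∀ {s}, s ∈ I → DifferentiableAt ℝ g s :=
    fun hg _ hs => (hg.contDiffAt (hIopen.mem_nhds hs)).differentiableAt h1le
  have hXdI : ∀ s ∈ I, DifferentiableAt ℝ X s :=
    fun s hs => (hXsm.contDiffAt (hIopen.mem_nhds hs)).differentiableAt h1le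
  have hcc : ∀ (f : (Fin n → ℝ) → ℝ), ContDiffOn ℝ ∞ f U → ∀ s ∈ I,
      HasDerivAt (fun t => f (X t)) (∑ a, pd a f (X s) * deriv (fun t => X t a) s) s :=
    fun f hf s hs => Tools.hasDerivAt_comp_curve (hdU hf (hXU s hs)) (hXdI s hs)
  -- first derivative of the transported curve
  have hXt1 : ∀ (ν : Fin n), ∀ s ∈ I, deriv (fun t => φ (X t) ν) s
      = ∑ a, pd a (fun y => φ y ν) (X s) * deriv (fun t => X t a) s :=
    fun ν s hs => (hcc _ (hφν ν) s hs).deriv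
  have hXt1' : ∀ ν : Fin n, deriv (fun t => φ (X t) ν) s₀
      = ∑ a, pd a (fun y => φ y ν) (X s₀) * deriv (fun t => X t a) s₀ :=
    fun ν => hXt1 ν s₀ hs₀
  -- first derivative of the transported field, on all of I
  have hXi1 : ∀ (ν : Fin n), ∀ s ∈ I,
      HasDerivAt (fun t => ∑ ρ, pd ρ (fun y => φ y ν) (X t) * ξ t ρ)
      (∑ ρ, ((∑ a, pd a (pd ρ (fun y => φ y ν)) (X s) * deriv (fun t => X t a) s) * ξ s ρ
        + pd ρ (fun y => φ y ν) (X s) * deriv (fun t => ξ t ρ) s)) s := by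
    intro ν s hs
    exact HasDerivAt.fun_sum fun ρ _ => (hcc _ (hd1 ρ ν) s hs).mul (hdI (hξν ρ) hs).hasDerivAt
  have hXi1' : ∀ ν : Fin n, deriv (fun t => ∑ ρ, pd ρ (fun y => φ y ν) (X t) * ξ t ρ) s₀
      = ∑ ρ, pd ρ (fun y => φ y ν) (X s₀) * deriv (fun t => ξ t ρ) s₀ := by
    intro ν
    rw [(hXi1 ν s₀ hs₀).deriv]
    simp [hd2p]
  -- second derivative of the transported field at s₀
  have hXi2 : deriv (deriv (fun t => ∑ ρ, pd ρ (fun y => φ y μ) (X t) * ξ t ρ)) s₀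
      = (∑ ρ, ∑ a, ∑ b, pd b (pd a (pd ρ (fun y => φ y μ))) (X s₀)
          * deriv (fun t => X t b) s₀ * deriv (fun t => X t a) s₀ * ξ s₀ ρ)
        + ∑ ρ, pd ρ (fun y => φ y μ) (X s₀) * deriv (deriv (fun t => ξ t ρ)) s₀ := by
    have hev : deriv (fun t => ∑ ρ, pd ρ (fun y => φ y μ) (X t) * ξ t ρ)
        =ᶠ[nhds s₀] (fun s => ∑ ρ,
          ((∑ a, pd a (pd ρ (fun y => φ y μ)) (X s) * deriv (fun t => X t a) s) * ξ s ρ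
            + pd ρ (fun y => φ y μ) (X s) * deriv (fun t => ξ t ρ) s)) := by
      filter_upwards [hIopen.mem_nhds hs₀] with s hs
      exact (hXi1 μ s hs).deriv
    rw [hev.deriv_eq]
    have hder : HasDerivAt (fun s => ∑ ρ,
          ((∑ a, pd a (pd ρ (fun y => φ y μ)) (X s) * deriv (fun t => X t a) s) * ξ s ρ
            + pd ρ (fun y => φ y μ) (X s) * deriv (fun t => ξ t ρ) s))
        (∑ ρ, (((∑ a, ((∑ b, pd b (pd a (pd ρ (fun y => φ y μ))) (X s₀)
                    * deriv (fun t => X t b) s₀) * deriv (fun t => X t a) s₀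
                  + pd a (pd ρ (fun y => φ y μ)) (X s₀) * deriv (deriv (fun t => X t a)) s₀))
                * ξ s₀ ρ
              + (∑ a, pd a (pd ρ (fun y => φ y μ)) (X s₀) * deriv (fun t => X t a) s₀)
                * deriv (fun t => ξ t ρ) s₀)
            + ((∑ a, pd a (pd ρ (fun y => φ y μ)) (X s₀) * deriv (fun t => X t a) s₀)
                * deriv (fun t => ξ t ρ) s₀
              + pd ρ (fun y => φ y μ) (X s₀) * deriv (deriv (fun t => ξ t ρ)) s₀))) s₀ := by
      refine HasDerivAt.fun_sum fun ρ _ => HasDerivAt.add (HasDerivAt.mul ?_ ?_) (HasDerivAt.mul ?_ ?_)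
      · exact HasDerivAt.fun_sum fun a _ =>
          (hcc _ (hd2 a ρ μ) s₀ hs₀).mul (hdI (hXν' a) hs₀).hasDerivAt
      · exact (hdI (hξν ρ) hs₀).hasDerivAt
      · exact hcc _ (hd1 ρ μ) s₀ hs₀
      · exact (hdI (hξν' ρ) hs₀).hasDerivAt
    rw [hder.deriv]
    simp only [hd2p, zero_mul, mul_zero, add_zero, Finset.sum_const_zero, zero_add]
    rw [Finset.sum_add_distrib]
    congr 1
    refine Finset.sum_congr rfl fun ρ _ => ?_
    simp only [Finset.sum_mul]
  -- contraction of the transformed connection with two tensorial vectors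
  have hcontr : ∀ A B : Fin n → ℝ,
      (∑ ν, ∑ σ, Γt (φ (X s₀)) μ ν σ * (∑ a, pd a (fun y => φ y ν) (X s₀) * A a)
        * (∑ b, pd b (fun y => φ y σ) (X s₀) * B b))
      = ∑ c, pd c (fun y => φ y μ) (X s₀) * (∑ a, ∑ b, Γ (X s₀) c a b * A a * B b) := by
    have hlawp : ∀ a b : Fin n,
        ∑ ν, ∑ σ, Γt (φ (X s₀)) μ ν σ * pd a (fun y => φ y ν) (X s₀)
          * pd b (fun y => φ y σ) (X s₀)
        = ∑ c, pd c (fun y => φ y μ) (X s₀) * Γ (X s₀) c a b := by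
      intro a b
      have h := hΓt (X s₀) hpU μ a b
      rw [hd2p a b μ] at h
      linarith
    intro A B
    calc ∑ ν, ∑ σ, Γt (φ (X s₀)) μ ν σ * (∑ a, pd a (fun y => φ y ν) (X s₀) * A a)
          * (∑ b, pd b (fun y => φ y σ) (X s₀) * B b)
        = ∑ ν, ∑ σ, ∑ a, ∑ b, Γt (φ (X s₀)) μ ν σ
            * (pd a (fun y => φ y ν) (X s₀) * A a) * (pd b (fun y => φ y σ) (X s₀) * B b) := by
          exact Finset.sum_congr rfl fun ν _ => Finset.sum_congr rfl fun σ _ =>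
            mul_sum_sum _ _ _
      _ = ∑ a, ∑ b, ∑ ν, ∑ σ, Γt (φ (X s₀)) μ ν σ
            * (pd a (fun y => φ y ν) (X s₀) * A a) * (pd b (fun y => φ y σ) (X s₀) * B b) :=
          sum_swap4 _
      _ = ∑ a, ∑ b, (A a * B b) * ∑ ν, ∑ σ, Γt (φ (X s₀)) μ ν σ
            * pd a (fun y => φ y ν) (X s₀) * pd b (fun y => φ y σ) (X s₀) := by
          refine Finset.sum_congr rfl fun a _ => Finset.sum_congr rfl fun b _ => ?_
          symm
          simp only [Finset.mul_sum]
          exact Finset.sum_congr rfl fun ν _ => Finset.sum_congr rfl fun σ _ => by ring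
      _ = ∑ a, ∑ b, ∑ c, (A a * B b) * (pd c (fun y => φ y μ) (X s₀) * Γ (X s₀) c a b) := by
          refine Finset.sum_congr rfl fun a _ => Finset.sum_congr rfl fun b _ => ?_
          rw [hlawp a b, Finset.mul_sum]
      _ = ∑ c, ∑ a, ∑ b, (A a * B b) * (pd c (fun y => φ y μ) (X s₀) * Γ (X s₀) c a b) :=
          sum_swap3 _
      _ = ∑ c, pd c (fun y => φ y μ) (X s₀) * (∑ a, ∑ b, Γ (X s₀) c a b * A a * B b) := by
          refine Finset.sum_congr rfl fun c _ => ?_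
          symm
          simp only [Finset.mul_sum]
          exact Finset.sum_congr rfl fun a _ => Finset.sum_congr rfl fun b _ => by ring
  -- Jacobian inverse relations
  have hinv1 : ∀ x ∈ U, ∀ α a : Fin n,
      ∑ ν, pd ν (fun y => φ y α) x * pd a (fun y => ψ y ν) (φ x)
        = if α = a then 1 else 0 := by
    intro x hx α a
    have hxV : φ x ∈ φ '' U := ⟨x, hx, rfl⟩
    have hψdx : DifferentiableAt ℝ ψ (φ x) :=
      (hψsm.contDiffAt (hVopen.mem_nhds hxV)).differentiableAt h1le
    have hφα : DifferentiableAt ℝ (fun y => φ y α) (ψ (φ x)) := by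
      rw [hψφ x hx]; exact hdU (hφν α) hx
    have hcomp := Tools.pd_comp_map (f := fun y => φ y α) (φ := ψ) hφα hψdx a
    rw [hψφ x hx] at hcomp
    have hleft : pd a (fun y => φ (ψ y) α) (φ x) = if α = a then 1 else 0 := by
      have hev : (fun y => φ (ψ y) α) =ᶠ[nhds (φ x)] (fun y => y α) := by
        filter_upwards [hVopen.mem_nhds hxV] with y hy
        obtain ⟨z, hz, rfl⟩ := hy
        rw [hψφ z hz]
      rw [Tools.pd_congr_nhds hev a, Tools2.pd_proj]
    rw [← hcomp]
    exact hleft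
  -- the transformed connection composed with φ equals the explicit formula
  have hGeq : ∀ x ∈ U, ∀ a b : Fin n, Γt (φ x) μ a b = Gfun φ ψ Γ μ a b x := by
    intro x hx a b
    have hlaw : ∀ ν σ : Fin n,
        (∑ α, pd α (fun y => φ y μ) x * Γ x α ν σ) - pd ν (pd σ (fun z => φ z μ)) x
        = ∑ α, ∑ β, Γt (φ x) μ α β * pd ν (fun y => φ y α) x * pd σ (fun y => φ y β) x := by
      intro ν σ
      have h := hΓt x hx μ ν σ
      linarith
    symm
    calc Gfun φ ψ Γ μ a b x
        = ∑ ν, ∑ σ, (∑ α, ∑ β, Γt (φ x) μ α β * pd ν (fun y => φ y α) x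
            * pd σ (fun y => φ y β) x)
            * pd a (fun y => ψ y ν) (φ x) * pd b (fun y => ψ y σ) (φ x) := by
          unfold Gfun
          exact Finset.sum_congr rfl fun ν _ => Finset.sum_congr rfl fun σ _ => by rw [hlaw]
      _ = ∑ ν, ∑ σ, ∑ α, ∑ β, Γt (φ x) μ α β * pd ν (fun y => φ y α) x
            * pd σ (fun y => φ y β) x
            * pd a (fun y => ψ y ν) (φ x) * pd b (fun y => ψ y σ) (φ x) := by
          refine Finset.sum_congr rfl fun ν _ => Finset.sum_congr rfl fun σ _ => ?_
          simp only [Finset.sum_mul]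
      _ = ∑ α, ∑ β, ∑ ν, ∑ σ, Γt (φ x) μ α β * pd ν (fun y => φ y α) x
            * pd σ (fun y => φ y β) x
            * pd a (fun y => ψ y ν) (φ x) * pd b (fun y => ψ y σ) (φ x) := sum_swap4 _
      _ = ∑ α, ∑ β, Γt (φ x) μ α β
            * (∑ ν, pd ν (fun y => φ y α) x * pd a (fun y => ψ y ν) (φ x))
            * (∑ σ, pd σ (fun y => φ y β) x * pd b (fun y => ψ y σ) (φ x)) := by
          refine Finset.sum_congr rfl fun α _ => Finset.sum_congr rfl fun β _ => ?_
          symm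
          rw [mul_sum_sum]
          exact Finset.sum_congr rfl fun ν _ => Finset.sum_congr rfl fun σ _ => by ring
      _ = ∑ α, ∑ β, Γt (φ x) μ α β * (if α = a then 1 else 0) * (if β = b then 1 else 0) := by
          refine Finset.sum_congr rfl fun α _ => Finset.sum_congr rfl fun β _ => ?_
          rw [hinv1 x hx α a, hinv1 x hx β b]
      _ = Γt (φ x) μ a b := by
          simp [mul_ite, mul_one, mul_zero, ite_mul, zero_mul, Finset.sum_ite_eq']
  have hφdp : DifferentiableAt ℝ φ (X s₀) :=
    (hφsm.contDiffAt (hU.mem_nhds hpU)).differentiableAt h1le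
  have hψcomp : ∀ a ν : Fin n, DifferentiableAt ℝ (fun x => pd a (fun y => ψ y ν) (φ x)) (X s₀) := by
    intro a ν
    exact DifferentiableAt.comp (X s₀) (hdV (hψd1 a ν) hqV) hφdp
  have hGdiff : ∀ a b : Fin n, DifferentiableAt ℝ (Gfun φ ψ Γ μ a b) (X s₀) := by
    intro a b
    unfold Gfun
    refine DifferentiableAt.fun_sum fun ν _ => DifferentiableAt.fun_sum fun σ _ => ?_
    refine DifferentiableAt.mul (DifferentiableAt.mul ?_ ?_) ?_
    · refine DifferentiableAt.sub ?_ (hdU (hd2 ν σ μ) hpU)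
      exact DifferentiableAt.fun_sum fun α _ => (hdU (hd1 α μ) hpU).mul (hdU (hΓsm α ν σ) hpU)
    · exact hψcomp a ν
    · exact hψcomp b σ
  have hΓtdiff : ∀ a b : Fin n, DifferentiableAt ℝ (fun y => Γt y μ a b) (φ (X s₀)) := by
    intro a b
    have h1 : DifferentiableAt ℝ ψ (φ (X s₀)) :=
      (hψsm.contDiffAt (hVopen.mem_nhds hqV)).differentiableAt h1le
    have h2 : DifferentiableAt ℝ (Gfun φ ψ Γ μ a b) (ψ (φ (X s₀))) := by
      rw [hψφ _ hpU]; exact hGdiff a b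
    have hGψ : DifferentiableAt ℝ (Gfun φ ψ Γ μ a b ∘ ψ) (φ (X s₀)) :=
      h2.comp _ h1
    have hev : (fun y => Γt y μ a b) =ᶠ[nhds (φ (X s₀))] (Gfun φ ψ Γ μ a b ∘ ψ) := by
      filter_upwards [hVopen.mem_nhds hqV] with y hy
      obtain ⟨z, hz, rfl⟩ := hy
      simp only [Function.comp_apply]
      rw [hψφ z hz]
      exact hGeq z hz a b
    exact hev.differentiableAt_iff.mpr hGψ
  have hchain3 : ∀ ν σ τ : Fin n, pd τ (fun x => Γt (φ x) μ ν σ) (X s₀)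
      = ∑ γ, pd γ (fun y => Γt y μ ν σ) (φ (X s₀)) * pd τ (fun y => φ y γ) (X s₀) :=
    fun ν σ τ => Tools.pd_comp_map (hΓtdiff ν σ)
      ((hφsm.contDiffAt (hU.mem_nhds hpU)).differentiableAt h1le) τ
  have hGfp : ∀ τ a b : Fin n, pd τ (fun x => Γt (φ x) μ a b) (X s₀)
      = pd τ (Gfun φ ψ Γ μ a b) (X s₀) := by
    intro τ a b
    refine Tools.pd_congr_nhds ?_ τ
    filter_upwards [hU.mem_nhds hpU] with x hx
    exact hGeq x hx a b
  -- differentiated transformation law at p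
  have hDL : ∀ τ ν σ : Fin n,
      (∑ α, pd α (fun y => φ y μ) (X s₀) * pd τ (fun x => Γ x α ν σ) (X s₀))
        - pd τ (pd ν (pd σ (fun z => φ z μ))) (X s₀)
      = ∑ α, ∑ β, pd τ (Gfun φ ψ Γ μ α β) (X s₀) * pd ν (fun y => φ y α) (X s₀)
          * pd σ (fun y => φ y β) (X s₀) := by
    intro τ ν σ
    have hLR : ∀ x ∈ U,
        (∑ α, pd α (fun y => φ y μ) x * Γ x α ν σ) - pd ν (pd σ (fun z => φ z μ)) x
        = ∑ α, ∑ β, Gfun φ ψ Γ μ α β x * pd ν (fun y => φ y α) x * pd σ (fun y => φ y β) x := by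
      intro x hx
      have h := hΓt x hx μ ν σ
      have h2 : ∀ α β : Fin n, Γt (φ x) μ α β = Gfun φ ψ Γ μ α β x := hGeq x hx
      simp only [← h2]
      linarith
    have hpd : pd τ (fun x => (∑ α, pd α (fun y => φ y μ) x * Γ x α ν σ)
        - pd ν (pd σ (fun z => φ z μ)) x) (X s₀)
        = pd τ (fun x => ∑ α, ∑ β, Gfun φ ψ Γ μ α β x * pd ν (fun y => φ y α) x
            * pd σ (fun y => φ y β) x) (X s₀) := by
      refine Tools.pd_congr_nhds ?_ τ
      filter_upwards [hU.mem_nhds hpU] with x hx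
      exact hLR x hx
    have hL : pd τ (fun x => (∑ α, pd α (fun y => φ y μ) x * Γ x α ν σ)
        - pd ν (pd σ (fun z => φ z μ)) x) (X s₀)
        = (∑ α, pd α (fun y => φ y μ) (X s₀) * pd τ (fun x => Γ x α ν σ) (X s₀))
          - pd τ (pd ν (pd σ (fun z => φ z μ))) (X s₀) := by
      rw [Tools2.pd_sub (DifferentiableAt.fun_sum fun α _ => (hdU (hd1 α μ) hpU).fun_mul
        (hdU (hΓsm α ν σ) hpU)) (hdU (hd2 ν σ μ) hpU) τ]
      congr 1
      rw [Tools2.pd_sum Finset.univ (fun α _ => (hdU (hd1 α μ) hpU).fun_mul (hdU (hΓsm α ν σ) hpU)) τ]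
      refine Finset.sum_congr rfl fun α _ => ?_
      rw [Tools2.pd_mul (hdU (hd1 α μ) hpU) (hdU (hΓsm α ν σ) hpU) τ, hd2p τ α μ]
      ring
    have hR : pd τ (fun x => ∑ α, ∑ β, Gfun φ ψ Γ μ α β x * pd ν (fun y => φ y α) x
        * pd σ (fun y => φ y β) x) (X s₀)
        = ∑ α, ∑ β, pd τ (Gfun φ ψ Γ μ α β) (X s₀) * pd ν (fun y => φ y α) (X s₀)
            * pd σ (fun y => φ y β) (X s₀) := by
      rw [Tools2.pd_sum Finset.univ (fun α _ => DifferentiableAt.fun_sum fun β _ =>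
        (((hGdiff α β).fun_mul (hdU (hd1 ν α) hpU)).fun_mul (hdU (hd1 σ β) hpU))) τ]
      refine Finset.sum_congr rfl fun α _ => ?_
      rw [Tools2.pd_sum Finset.univ (fun β _ =>
        (((hGdiff α β).fun_mul (hdU (hd1 ν α) hpU)).fun_mul (hdU (hd1 σ β) hpU))) τ]
      refine Finset.sum_congr rfl fun β _ => ?_
      rw [Tools2.pd_mul ((hGdiff α β).fun_mul (hdU (hd1 ν α) hpU)) (hdU (hd1 σ β) hpU) τ,
        Tools2.pd_mul (hGdiff α β) (hdU (hd1 ν α) hpU) τ, hd2p τ ν α, hd2p τ σ β]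
      ring
    rw [← hL, hpd, hR]
  -- symmetry of third partials
  have hswap_inner : ∀ (i j : Fin n), ∀ x ∈ U,
      pd i (pd j (fun z => φ z μ)) x = pd j (pd i (fun z => φ z μ)) x :=
    fun i j x hx => Tools.pd_pd_comm hU hx (hφν μ) i j
  have hE3 : ∀ τ a b : Fin n, pd b (pd a (pd τ (fun z => φ z μ))) (X s₀)
      = pd τ (pd a (pd b (fun z => φ z μ))) (X s₀) := by
    intro τ a b
    have h1 : pd b (pd a (pd τ (fun z => φ z μ))) (X s₀)
        = pd b (pd τ (pd a (fun z => φ z μ))) (X s₀) := by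
      refine Tools.pd_congr_nhds ?_ b
      filter_upwards [hU.mem_nhds hpU] with x hx
      exact Tools.pd_pd_comm hU hx (hφν μ) a τ
    have h2 : pd b (pd τ (pd a (fun z => φ z μ))) (X s₀)
        = pd τ (pd b (pd a (fun z => φ z μ))) (X s₀) :=
      Tools.pd_pd_comm hU hpU (hd1 a μ) b τ
    have h3 : pd τ (pd b (pd a (fun z => φ z μ))) (X s₀)
        = pd τ (pd a (pd b (fun z => φ z μ))) (X s₀) := by
      refine Tools.pd_congr_nhds ?_ τ
      filter_upwards [hU.mem_nhds hpU] with x hx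
      exact Tools.pd_pd_comm hU hx (hφν μ) b a
    rw [h1, h2, h3]
  have hEsym : ∀ τ a b : Fin n, pd τ (pd a (pd b (fun z => φ z μ))) (X s₀)
      = pd τ (pd b (pd a (fun z => φ z μ))) (X s₀) := by
    intro τ a b
    refine Tools.pd_congr_nhds ?_ τ
    filter_upwards [hU.mem_nhds hpU] with x hx
    exact Tools.pd_pd_comm hU hx (hφν μ) a b
  -- the Jacobi field equation, solved for the second derivative
  have hξred : ∀ c : Fin n, deriv (deriv (fun t => ξ t c)) s₀
      = -(∑ ν, ∑ σ, Γ (X s₀) c ν σ *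
            (2 * deriv (fun t => ξ t ν) s₀ * deriv (fun t => X t σ) s₀
              + deriv (fun t => ξ t ν) s₀ * deriv (fun t => ξ t σ) s₀))
        - ∑ ν, ∑ σ, ∑ α, pd α (fun x => Γ x c ν σ) (X s₀) * ξ s₀ α *
            (deriv (fun t => X t ν) s₀ + deriv (fun t => ξ t ν) s₀) *
            (deriv (fun t => X t σ) s₀ + deriv (fun t => ξ t σ) s₀) := by
    intro c
    have h0 := hξ s₀ hs₀ c
    rw [genJacobiOp] at h0
    linarith
  -- now assemble
  simp only [genJacobiOp]
  rw [hXi2]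
  simp only [hXt1', hXi1']
  have hT2 : ∑ ν, ∑ σ, Γt (φ (X s₀)) μ ν σ *
        ((2 * ∑ ρ, pd ρ (fun y => φ y ν) (X s₀) * deriv (fun t => ξ t ρ) s₀) *
            ∑ a, pd a (fun y => φ y σ) (X s₀) * deriv (fun t => X t a) s₀ +
          (∑ ρ, pd ρ (fun y => φ y ν) (X s₀) * deriv (fun t => ξ t ρ) s₀) *
            ∑ ρ, pd ρ (fun y => φ y σ) (X s₀) * deriv (fun t => ξ t ρ) s₀)
      = ∑ c, pd c (fun y => φ y μ) (X s₀) *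
          ∑ ν, ∑ σ, Γ (X s₀) c ν σ *
            (2 * deriv (fun t => ξ t ν) s₀ * deriv (fun t => X t σ) s₀ +
              deriv (fun t => ξ t ν) s₀ * deriv (fun t => ξ t σ) s₀) := by
    have e1 := hcontr (fun ρ => deriv (fun t => ξ t ρ) s₀) (fun a => deriv (fun t => X t a) s₀)
    have e2 := hcontr (fun ρ => deriv (fun t => ξ t ρ) s₀) (fun ρ => deriv (fun t => ξ t ρ) s₀)
    calc ∑ ν, ∑ σ, Γt (φ (X s₀)) μ ν σ *
          ((2 * ∑ ρ, pd ρ (fun y => φ y ν) (X s₀) * deriv (fun t => ξ t ρ) s₀) *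
              ∑ a, pd a (fun y => φ y σ) (X s₀) * deriv (fun t => X t a) s₀ +
            (∑ ρ, pd ρ (fun y => φ y ν) (X s₀) * deriv (fun t => ξ t ρ) s₀) *
              ∑ ρ, pd ρ (fun y => φ y σ) (X s₀) * deriv (fun t => ξ t ρ) s₀)
        = ∑ ν, ∑ σ,
            (2 * ((Γt (φ (X s₀)) μ ν σ *
                (∑ ρ, pd ρ (fun y => φ y ν) (X s₀) * deriv (fun t => ξ t ρ) s₀)) *
                ∑ a, pd a (fun y => φ y σ) (X s₀) * deriv (fun t => X t a) s₀)
              + (Γt (φ (X s₀)) μ ν σ *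
                (∑ ρ, pd ρ (fun y => φ y ν) (X s₀) * deriv (fun t => ξ t ρ) s₀)) *
                ∑ ρ, pd ρ (fun y => φ y σ) (X s₀) * deriv (fun t => ξ t ρ) s₀) := by
          exact Finset.sum_congr rfl fun ν _ => Finset.sum_congr rfl fun σ _ => by ring
      _ = 2 * (∑ ν, ∑ σ, (Γt (φ (X s₀)) μ ν σ *
                (∑ ρ, pd ρ (fun y => φ y ν) (X s₀) * deriv (fun t => ξ t ρ) s₀)) *
                ∑ a, pd a (fun y => φ y σ) (X s₀) * deriv (fun t => X t a) s₀)
          + ∑ ν, ∑ σ, (Γt (φ (X s₀)) μ ν σ *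
                (∑ ρ, pd ρ (fun y => φ y ν) (X s₀) * deriv (fun t => ξ t ρ) s₀)) *
                ∑ ρ, pd ρ (fun y => φ y σ) (X s₀) * deriv (fun t => ξ t ρ) s₀ := by
          simp only [Finset.sum_add_distrib, ← Finset.mul_sum]
      _ = 2 * ∑ c, pd c (fun y => φ y μ) (X s₀) *
              ∑ a, ∑ b, Γ (X s₀) c a b * deriv (fun t => ξ t a) s₀ * deriv (fun t => X t b) s₀
          + ∑ c, pd c (fun y => φ y μ) (X s₀) *
              ∑ a, ∑ b, Γ (X s₀) c a b * deriv (fun t => ξ t a) s₀ * deriv (fun t => ξ t b) s₀ := by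
          rw [e1, e2]
      _ = ∑ c, pd c (fun y => φ y μ) (X s₀) *
            ∑ ν, ∑ σ, Γ (X s₀) c ν σ *
              (2 * deriv (fun t => ξ t ν) s₀ * deriv (fun t => X t σ) s₀ +
                deriv (fun t => ξ t ν) s₀ * deriv (fun t => ξ t σ) s₀) := by
          rw [Finset.mul_sum, ← Finset.sum_add_distrib]
          refine Finset.sum_congr rfl fun c _ => ?_
          simp only [Finset.mul_sum, ← Finset.sum_add_distrib]
          refine Finset.sum_congr rfl fun ν _ => Finset.sum_congr rfl fun σ _ => by ring
  have hW : ∀ ν : Fin n,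
      ((∑ a, pd a (fun y => φ y ν) (X s₀) * deriv (fun t => X t a) s₀)
        + ∑ ρ, pd ρ (fun y => φ y ν) (X s₀) * deriv (fun t => ξ t ρ) s₀)
      = ∑ a, pd a (fun y => φ y ν) (X s₀)
          * (deriv (fun t => X t a) s₀ + deriv (fun t => ξ t a) s₀) := by
    intro ν
    rw [← Finset.sum_add_distrib]
    exact Finset.sum_congr rfl fun a _ => by ring
  have hinner : ∀ ν σ : Fin n,
      (∑ α, pd α (fun y => Γt y μ ν σ) (φ (X s₀))
        * ∑ ρ, pd ρ (fun y => φ y α) (X s₀) * ξ s₀ ρ)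
      = ∑ τ, ξ s₀ τ * pd τ (Gfun φ ψ Γ μ ν σ) (X s₀) := by
    intro ν σ
    calc ∑ α, pd α (fun y => Γt y μ ν σ) (φ (X s₀))
          * ∑ ρ, pd ρ (fun y => φ y α) (X s₀) * ξ s₀ ρ
        = ∑ α, ∑ ρ, pd α (fun y => Γt y μ ν σ) (φ (X s₀))
            * (pd ρ (fun y => φ y α) (X s₀) * ξ s₀ ρ) := by
          simp only [Finset.mul_sum]
      _ = ∑ ρ, ∑ α, pd α (fun y => Γt y μ ν σ) (φ (X s₀))
            * (pd ρ (fun y => φ y α) (X s₀) * ξ s₀ ρ) := Finset.sum_comm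
      _ = ∑ ρ, ξ s₀ ρ * ∑ α, pd α (fun y => Γt y μ ν σ) (φ (X s₀))
            * pd ρ (fun y => φ y α) (X s₀) := by
          refine Finset.sum_congr rfl fun ρ _ => ?_
          rw [Finset.mul_sum]
          exact Finset.sum_congr rfl fun α _ => by ring
      _ = ∑ τ, ξ s₀ τ * pd τ (Gfun φ ψ Γ μ ν σ) (X s₀) := by
          refine Finset.sum_congr rfl fun ρ _ => ?_
          rw [← hchain3 ν σ ρ, hGfp ρ ν σ]
  have hT3 : (∑ ν, ∑ σ, ∑ α,
        (pd α (fun y => Γt y μ ν σ) (φ (X s₀))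
          * ∑ ρ, pd ρ (fun y => φ y α) (X s₀) * ξ s₀ ρ) *
        ((∑ a, pd a (fun y => φ y ν) (X s₀) * deriv (fun t => X t a) s₀)
          + ∑ ρ, pd ρ (fun y => φ y ν) (X s₀) * deriv (fun t => ξ t ρ) s₀) *
        ((∑ a, pd a (fun y => φ y σ) (X s₀) * deriv (fun t => X t a) s₀)
          + ∑ ρ, pd ρ (fun y => φ y σ) (X s₀) * deriv (fun t => ξ t ρ) s₀))
      = (∑ c, pd c (fun y => φ y μ) (X s₀) *
          ∑ ν, ∑ σ, ∑ α, pd α (fun x => Γ x c ν σ) (X s₀) * ξ s₀ α *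
            (deriv (fun t => X t ν) s₀ + deriv (fun t => ξ t ν) s₀) *
            (deriv (fun t => X t σ) s₀ + deriv (fun t => ξ t σ) s₀))
        - ∑ τ, ∑ a, ∑ b, pd τ (pd a (pd b (fun y => φ y μ))) (X s₀) * ξ s₀ τ *
            (deriv (fun t => X t a) s₀ + deriv (fun t => ξ t a) s₀) *
            (deriv (fun t => X t b) s₀ + deriv (fun t => ξ t b) s₀) := by
    calc (∑ ν, ∑ σ, ∑ α,
        (pd α (fun y => Γt y μ ν σ) (φ (X s₀))
          * ∑ ρ, pd ρ (fun y => φ y α) (X s₀) * ξ s₀ ρ) *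
        ((∑ a, pd a (fun y => φ y ν) (X s₀) * deriv (fun t => X t a) s₀)
          + ∑ ρ, pd ρ (fun y => φ y ν) (X s₀) * deriv (fun t => ξ t ρ) s₀) *
        ((∑ a, pd a (fun y => φ y σ) (X s₀) * deriv (fun t => X t a) s₀)
          + ∑ ρ, pd ρ (fun y => φ y σ) (X s₀) * deriv (fun t => ξ t ρ) s₀))
        = ∑ ν, ∑ σ, (∑ τ, ξ s₀ τ * pd τ (Gfun φ ψ Γ μ ν σ) (X s₀)) *
            (∑ a, pd a (fun y => φ y ν) (X s₀)
              * (deriv (fun t => X t a) s₀ + deriv (fun t => ξ t a) s₀)) *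
            (∑ b, pd b (fun y => φ y σ) (X s₀)
              * (deriv (fun t => X t b) s₀ + deriv (fun t => ξ t b) s₀)) := by
          refine Finset.sum_congr rfl fun ν _ => Finset.sum_congr rfl fun σ _ => ?_
          rw [← hinner ν σ, ← hW ν, ← hW σ, Finset.sum_mul, Finset.sum_mul]
      _ = ∑ ν, ∑ σ, ∑ τ, ∑ a, ∑ b,
            (ξ s₀ τ * pd τ (Gfun φ ψ Γ μ ν σ) (X s₀)) *
            (pd a (fun y => φ y ν) (X s₀)
              * (deriv (fun t => X t a) s₀ + deriv (fun t => ξ t a) s₀)) *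
            (pd b (fun y => φ y σ) (X s₀)
              * (deriv (fun t => X t b) s₀ + deriv (fun t => ξ t b) s₀)) := by
          exact Finset.sum_congr rfl fun ν _ => Finset.sum_congr rfl fun σ _ => tri_sum _ _ _
      _ = ∑ τ, ∑ ν, ∑ σ, ∑ a, ∑ b,
            (ξ s₀ τ * pd τ (Gfun φ ψ Γ μ ν σ) (X s₀)) *
            (pd a (fun y => φ y ν) (X s₀)
              * (deriv (fun t => X t a) s₀ + deriv (fun t => ξ t a) s₀)) *
            (pd b (fun y => φ y σ) (X s₀)
              * (deriv (fun t => X t b) s₀ + deriv (fun t => ξ t b) s₀)) := sum_swap3 _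
      _ = ∑ τ, ∑ a, ∑ b, (ξ s₀ τ *
            (deriv (fun t => X t a) s₀ + deriv (fun t => ξ t a) s₀) *
            (deriv (fun t => X t b) s₀ + deriv (fun t => ξ t b) s₀)) *
            (∑ ν, ∑ σ, pd τ (Gfun φ ψ Γ μ ν σ) (X s₀) * pd a (fun y => φ y ν) (X s₀)
              * pd b (fun y => φ y σ) (X s₀)) := by
          refine Finset.sum_congr rfl fun τ _ => ?_
          rw [sum_swap4]
          refine Finset.sum_congr rfl fun a _ => Finset.sum_congr rfl fun b _ => ?_
          symm
          simp only [Finset.mul_sum]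
          exact Finset.sum_congr rfl fun ν _ => Finset.sum_congr rfl fun σ _ => by ring
      _ = ∑ τ, ∑ a, ∑ b, (ξ s₀ τ *
            (deriv (fun t => X t a) s₀ + deriv (fun t => ξ t a) s₀) *
            (deriv (fun t => X t b) s₀ + deriv (fun t => ξ t b) s₀)) *
            ((∑ c, pd c (fun y => φ y μ) (X s₀) * pd τ (fun x => Γ x c a b) (X s₀))
              - pd τ (pd a (pd b (fun y => φ y μ))) (X s₀)) := by
          refine Finset.sum_congr rfl fun τ _ => Finset.sum_congr rfl fun a _ =>
            Finset.sum_congr rfl fun b _ => ?_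
          rw [← hDL τ a b]
      _ = (∑ τ, ∑ a, ∑ b, ∑ c, ξ s₀ τ *
            (deriv (fun t => X t a) s₀ + deriv (fun t => ξ t a) s₀) *
            (deriv (fun t => X t b) s₀ + deriv (fun t => ξ t b) s₀) *
            (pd c (fun y => φ y μ) (X s₀) * pd τ (fun x => Γ x c a b) (X s₀)))
          - ∑ τ, ∑ a, ∑ b, pd τ (pd a (pd b (fun y => φ y μ))) (X s₀) * ξ s₀ τ *
              (deriv (fun t => X t a) s₀ + deriv (fun t => ξ t a) s₀) *
              (deriv (fun t => X t b) s₀ + deriv (fun t => ξ t b) s₀) := by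
          simp only [← Finset.sum_sub_distrib]
          refine Finset.sum_congr rfl fun τ _ => Finset.sum_congr rfl fun a _ =>
            Finset.sum_congr rfl fun b _ => ?_
          rw [mul_sub, Finset.mul_sum]
          congr 1
          ring
      _ = (∑ c, pd c (fun y => φ y μ) (X s₀) *
            ∑ ν, ∑ σ, ∑ α, pd α (fun x => Γ x c ν σ) (X s₀) * ξ s₀ α *
              (deriv (fun t => X t ν) s₀ + deriv (fun t => ξ t ν) s₀) *
              (deriv (fun t => X t σ) s₀ + deriv (fun t => ξ t σ) s₀))
          - ∑ τ, ∑ a, ∑ b, pd τ (pd a (pd b (fun y => φ y μ))) (X s₀) * ξ s₀ τ *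
              (deriv (fun t => X t a) s₀ + deriv (fun t => ξ t a) s₀) *
              (deriv (fun t => X t b) s₀ + deriv (fun t => ξ t b) s₀) := by
          congr 1
          rw [sum_perm4]
          refine Finset.sum_congr rfl fun c _ => ?_
          symm
          simp only [Finset.mul_sum]
          refine Finset.sum_congr rfl fun a _ => Finset.sum_congr rfl fun b _ =>
            Finset.sum_congr rfl fun τ _ => by ring
  rw [hT2, hT3]
  simp only [hξred]
  have hzero : (∑ ρ, pd ρ (fun y => φ y μ) (X s₀) *
        (-(∑ ν, ∑ σ, Γ (X s₀) ρ ν σ *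
            (2 * deriv (fun t => ξ t ν) s₀ * deriv (fun t => X t σ) s₀
              + deriv (fun t => ξ t ν) s₀ * deriv (fun t => ξ t σ) s₀))
          - ∑ ν, ∑ σ, ∑ α, pd α (fun x => Γ x ρ ν σ) (X s₀) * ξ s₀ α *
              (deriv (fun t => X t ν) s₀ + deriv (fun t => ξ t ν) s₀) * (deriv (fun t => X t σ) s₀ + deriv (fun t => ξ t σ) s₀)))
      + (∑ c, pd c (fun y => φ y μ) (X s₀) *
          ∑ ν, ∑ σ, Γ (X s₀) c ν σ *
            (2 * deriv (fun t => ξ t ν) s₀ * deriv (fun t => X t σ) s₀ +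
              deriv (fun t => ξ t ν) s₀ * deriv (fun t => ξ t σ) s₀))
      + (∑ c, pd c (fun y => φ y μ) (X s₀) *
          ∑ ν, ∑ σ, ∑ α, pd α (fun x => Γ x c ν σ) (X s₀) * ξ s₀ α *
            (deriv (fun t => X t ν) s₀ + deriv (fun t => ξ t ν) s₀) * (deriv (fun t => X t σ) s₀ + deriv (fun t => ξ t σ) s₀)) = 0 := by
    rw [← Finset.sum_add_distrib, ← Finset.sum_add_distrib]
    exact Finset.sum_eq_zero fun c _ => by ring
  have hS1 : (∑ ρ, ∑ a, ∑ b, pd b (pd a (pd ρ (fun y => φ y μ))) (X s₀)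
        * deriv (fun t => X t b) s₀ * deriv (fun t => X t a) s₀ * ξ s₀ ρ)
      = ∑ ρ, ∑ a, ∑ b, pd ρ (pd a (pd b (fun y => φ y μ))) (X s₀)
        * deriv (fun t => X t b) s₀ * deriv (fun t => X t a) s₀ * ξ s₀ ρ := by
    refine Finset.sum_congr rfl fun ρ _ => Finset.sum_congr rfl fun a _ =>
      Finset.sum_congr rfl fun b _ => ?_
    rw [hE3 ρ a b]
  have hetaT : ∀ τ ρ σ' : Fin n,
      pd τ (fun x => pd ρ (fun y => pd σ' (fun z => φ z μ) y) x) (X s₀)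
        = pd τ (pd ρ (pd σ' (fun y => φ y μ))) (X s₀) := fun _ _ _ => rfl
  have hPQ : (∑ τ, ∑ a, ∑ b, pd τ (pd a (pd b (fun y => φ y μ))) (X s₀) * (ξ s₀ τ *
        (deriv (fun t => X t a) s₀ * deriv (fun t => ξ t b) s₀)))
      = ∑ τ, ∑ a, ∑ b, pd τ (pd a (pd b (fun y => φ y μ))) (X s₀) * (ξ s₀ τ *
        (deriv (fun t => ξ t a) s₀ * deriv (fun t => X t b) s₀)) := by
    refine Finset.sum_congr rfl fun τ _ => ?_
    conv_rhs => rw [Finset.sum_comm]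
    refine Finset.sum_congr rfl fun a _ => Finset.sum_congr rfl fun b _ => ?_
    rw [hEsym τ a b]
    ring
  have key : ((∑ ρ, ∑ a, ∑ b, pd ρ (pd a (pd b (fun y => φ y μ))) (X s₀)
        * deriv (fun t => X t b) s₀ * deriv (fun t => X t a) s₀ * ξ s₀ ρ)
      - ∑ τ, ∑ a, ∑ b, pd τ (pd a (pd b (fun y => φ y μ))) (X s₀) * ξ s₀ τ * (deriv (fun t => X t a) s₀ + deriv (fun t => ξ t a) s₀) * (deriv (fun t => X t b) s₀ + deriv (fun t => ξ t b) s₀))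
      + (∑ τ, ∑ ρ, ∑ σ, pd τ (fun x => pd ρ (fun y => pd σ (fun z => φ z μ) y) x) (X s₀)
          * ξ s₀ τ * (2 * deriv (fun t => X t ρ) s₀ + deriv (fun t => ξ t ρ) s₀)
          * deriv (fun t => ξ t σ) s₀) = 0 := by
    simp only [hetaT]
    have hcomb : ((∑ ρ, ∑ a, ∑ b, pd ρ (pd a (pd b (fun y => φ y μ))) (X s₀)
          * deriv (fun t => X t b) s₀ * deriv (fun t => X t a) s₀ * ξ s₀ ρ)
        - ∑ τ, ∑ a, ∑ b, pd τ (pd a (pd b (fun y => φ y μ))) (X s₀) * ξ s₀ τ * (deriv (fun t => X t a) s₀ + deriv (fun t => ξ t a) s₀) * (deriv (fun t => X t b) s₀ + deriv (fun t => ξ t b) s₀))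
        + (∑ τ, ∑ ρ, ∑ σ, pd τ (pd ρ (pd σ (fun y => φ y μ))) (X s₀)
            * ξ s₀ τ * (2 * deriv (fun t => X t ρ) s₀ + deriv (fun t => ξ t ρ) s₀)
            * deriv (fun t => ξ t σ) s₀)
        = (∑ τ, ∑ a, ∑ b, pd τ (pd a (pd b (fun y => φ y μ))) (X s₀) * (ξ s₀ τ *
            (deriv (fun t => X t a) s₀ * deriv (fun t => ξ t b) s₀)))
          - ∑ τ, ∑ a, ∑ b, pd τ (pd a (pd b (fun y => φ y μ))) (X s₀) * (ξ s₀ τ *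
            (deriv (fun t => ξ t a) s₀ * deriv (fun t => X t b) s₀)) := by
      simp only [← Finset.sum_sub_distrib, ← Finset.sum_add_distrib]
      refine Finset.sum_congr rfl fun τ _ => Finset.sum_congr rfl fun a _ =>
        Finset.sum_congr rfl fun b _ => ?_
      ring
    rw [hcomb, hPQ, sub_self]
  linear_combination hzero + hS1 + key
end
end

section
/- Let Γ be smooth torsion-free connection coefficients on an open set U ⊆ ℝⁿ (n ≥ 2), let X : I → U be a geodesic which is regular (Ẋ(s) ≠ 0 for all s ∈ I), let Ĩ ⊆ ℝ be an open interval, and let ψ : Ĩ → I be a smooth map such that X∘ψ : Ĩ → U is also a regular geodesic. Then ψ is affine: there exist constants A ∈ ℝ \\ {0} and B ∈ ℝ such that ψ(s) = A s + B for all s ∈ Ĩ. -/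
open Set ContDiff

noncomputable section

lemma aux_const_of_deriv_zero {s : Set ℝ} (hconv : Convex ℝ s) (hso : IsOpen s)
    {f : ℝ → ℝ} (hf : ∀ x ∈ s, HasDerivAt f 0 x) {x y : ℝ} (hx : x ∈ s) (hy : y ∈ s) :
    f x = f y := by
  refine hconv.is_const_of_fderivWithin_eq_zero
    (fun z hz => ((hf z hz).differentiableAt).differentiableWithinAt) (fun z hz => ?_) hx hy
  rw [fderivWithin_of_isOpen hso hz]
  rw [(hf z hz).hasFDerivAt.fderiv]
  ext v
  simp

/-- A smooth reparametrization of a regular geodesic that is again a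
regular geodesic is affine: `ψ s = A s + B` with `A ≠ 0`. -/
theorem geodesic_reparam_affine
    {n : ℕ} (hn : 2 ≤ n) (U : Set (Fin n → ℝ)) (hU : IsOpen U)
    (Γ : (Fin n → ℝ) → Fin n → Fin n → Fin n → ℝ) (hΓ : IsConnCoeff U Γ)
    (I : Set ℝ) (hIopen : IsOpen I) (hIint : I.OrdConnected)
    (X : ℝ → Fin n → ℝ) (hXU : ∀ s ∈ I, X s ∈ U) (hXsm : ContDiffOn ℝ ∞ X I)
    (hXgeo : IsGeodesic Γ I X)
    (hXreg : ∀ s ∈ I, ∃ μ : Fin n, deriv (fun t => X t μ) s ≠ 0)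
    (It : Set ℝ) (hItopen : IsOpen It) (hItint : It.OrdConnected)
    (ψ : ℝ → ℝ) (hψsm : ContDiffOn ℝ ∞ ψ It) (hψmaps : ∀ s ∈ It, ψ s ∈ I)
    (hcomp : IsGeodesic Γ It (fun s => X (ψ s)))
    (hreg : ∀ s ∈ It, ∃ μ : Fin n, deriv (fun t => X (ψ t) μ) s ≠ 0) :
    ∃ A B : ℝ, A ≠ 0 ∧ ∀ s ∈ It, ψ s = A * s + B := by
  classical
  rcases Set.eq_empty_or_nonempty It with hemp | ⟨s₀, hs₀⟩
  · exact ⟨1, 0, one_ne_zero, by simp [hemp]⟩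
  have hconv : Convex ℝ It := convex_iff_ordConnected.mpr hItint
  have hψd : ∀ s ∈ It, DifferentiableAt ℝ ψ s := fun s hs =>
    (hψsm.contDiffAt (hItopen.mem_nhds hs)).differentiableAt (by norm_num)
  have hX1 : ∀ μ : Fin n, ContDiffOn ℝ ∞ (fun t => X t μ) I := fun μ =>
    (contDiffOn_pi.mp hXsm) μ
  have hXd : ∀ (μ : Fin n), ∀ x ∈ I, DifferentiableAt ℝ (fun t => X t μ) x := fun μ x hx =>
    ((hX1 μ).contDiffAt (hIopen.mem_nhds hx)).differentiableAt (by norm_num)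
  have hX2 : ∀ μ : Fin n, ContDiffOn ℝ ∞ (deriv (fun t => X t μ)) I := fun μ =>
    (hX1 μ).deriv_of_isOpen hIopen (by norm_num)
  have hψ2 : ContDiffOn ℝ ∞ (deriv ψ) It := hψsm.deriv_of_isOpen hItopen (by norm_num)
  have key1 : ∀ s ∈ It, ∀ μ : Fin n, HasDerivAt (fun t => X (ψ t) μ)
      (deriv (fun t => X t μ) (ψ s) * deriv ψ s) s := by
    intro s hs μ
    exact ((hXd μ (ψ s) (hψmaps s hs)).hasDerivAt).comp s ((hψd s hs).hasDerivAt)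
  have hderiv_eq : ∀ (μ : Fin n), ∀ s ∈ It, deriv (fun t => X (ψ t) μ) s
      = deriv (fun t => X t μ) (ψ s) * deriv ψ s := fun μ s hs => (key1 s hs μ).deriv
  have key2 : ∀ s ∈ It, ∀ μ : Fin n, deriv (deriv (fun t => X (ψ t) μ)) s
      = deriv (deriv (fun t => X t μ)) (ψ s) * deriv ψ s * deriv ψ s
        + deriv (fun t => X t μ) (ψ s) * deriv (deriv ψ) s := by
    intro s hs μ
    have hev : deriv (fun t => X (ψ t) μ) =ᶠ[nhds s]
        (fun t => deriv (fun u => X u μ) (ψ t) * deriv ψ t) := by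
      filter_upwards [hItopen.mem_nhds hs] with t ht using hderiv_eq μ t ht
    rw [hev.deriv_eq]
    have hA : HasDerivAt (fun t => deriv (fun u => X u μ) (ψ t))
        (deriv (deriv (fun u => X u μ)) (ψ s) * deriv ψ s) s := by
      have h2 : HasDerivAt (deriv (fun u => X u μ))
          (deriv (deriv (fun u => X u μ)) (ψ s)) (ψ s) :=
        (((hX2 μ).contDiffAt (hIopen.mem_nhds (hψmaps s hs))).differentiableAt
          (by norm_num)).hasDerivAt
      exact h2.comp s ((hψd s hs).hasDerivAt)
    have hB : HasDerivAt (deriv ψ) (deriv (deriv ψ) s) s :=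
      ((hψ2.contDiffAt (hItopen.mem_nhds hs)).differentiableAt (by norm_num)).hasDerivAt
    exact (hA.mul hB).deriv
  have hpsi2 : ∀ s ∈ It, deriv (deriv ψ) s = 0 := by
    intro s hs
    obtain ⟨μ, hμ⟩ := hXreg (ψ s) (hψmaps s hs)
    have hc := hcomp s hs μ
    have hg := hXgeo (ψ s) (hψmaps s hs) μ
    have hre : ∀ ν : Fin n, deriv (fun t => X (ψ t) ν) s
        = deriv (fun t => X t ν) (ψ s) * deriv ψ s := fun ν => hderiv_eq ν s hs
    rw [key2 s hs μ] at hc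
    simp only [hre] at hc
    have hs2 : (∑ ν, ∑ σ, Γ (X (ψ s)) μ ν σ * (deriv (fun t => X t ν) (ψ s) * deriv ψ s)
          * (deriv (fun t => X t σ) (ψ s) * deriv ψ s))
        = (∑ ν, ∑ σ, Γ (X (ψ s)) μ ν σ * deriv (fun t => X t ν) (ψ s)
          * deriv (fun t => X t σ) (ψ s)) * (deriv ψ s * deriv ψ s) := by
      rw [Finset.sum_mul]
      refine Finset.sum_congr rfl fun ν _ => ?_
      rw [Finset.sum_mul]
      exact Finset.sum_congr rfl fun σ _ => by ring
    rw [hs2] at hc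
    have hzero : deriv (fun t => X t μ) (ψ s) * deriv (deriv ψ) s = 0 := by
      linear_combination hc - (deriv ψ s * deriv ψ s) * hg
    exact (mul_eq_zero.mp hzero).resolve_left hμ
  set A := deriv ψ s₀ with hA
  have hderiv_hasA : ∀ s ∈ It, HasDerivAt (deriv ψ) 0 s := by
    intro s hs
    have := ((hψ2.contDiffAt (hItopen.mem_nhds hs)).differentiableAt (E := ℝ)
      (by norm_num)).hasDerivAt
    rwa [hpsi2 s hs] at this
  have hconstA : ∀ s ∈ It, deriv ψ s = A :=
    fun s hs => aux_const_of_deriv_zero hconv hItopen hderiv_hasA hs hs₀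
  set B := ψ s₀ - A * s₀ with hB
  have hlin : ∀ s ∈ It, ψ s = A * s + B := by
    intro s hs
    have hc : ∀ x ∈ It, HasDerivAt (fun t => ψ t - A * t) 0 x := by
      intro x hx
      have h1 : HasDerivAt ψ A x := by
        have := (hψd x hx).hasDerivAt
        rwa [hconstA x hx] at this
      have h2 : HasDerivAt (fun t : ℝ => A * t) A x := by
        simpa using (hasDerivAt_id x).const_mul A
      have h3 := h1.sub h2
      rw [sub_self] at h3
      exact h3
    have := aux_const_of_deriv_zero hconv hItopen hc hs hs₀
    simp only [hB] at this ⊢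
    linarith
  refine ⟨A, B, ?_, hlin⟩
  obtain ⟨μ, hμ⟩ := hreg s₀ hs₀
  rw [hderiv_eq μ s₀ hs₀] at hμ
  exact right_ne_zero_of_mul hμ
end
end
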